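/- arXiv:2301.00545 — 4 statements merged into one kernel-verified Lean document; each statement's English description precedes it below -/
import Mathlib

section
/- For i.i.d. Bernoulli(ρ) random variables B_1,...,B_n, the process M_j := (1+j)/(1+S_j), where S_j = B_1 + ... + B_j, is a super-martingale with respect to the reverse filtration F_j = σ(S_j, B_{j+1}, ..., B_n); that is, E[M_j | F_{j+1}] ≤ M_{j+1} for all 1 ≤ j ≤ n-1. -/
open MeasureTheory ProbabilityTheory

/-- The atom of the σ-algebra generated by `B i`, `i ∈ I`, on which `B i = 1` iff `i ∈ T`. -/
private def atomSet {Ω : Type*} (B : ℕ → Ω → ℝ) (I T : Finset ℕ) : Set Ω :=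
  {ω | ∀ i ∈ I, B i ω = if i ∈ T then 1 else 0}

private lemma atomSet_eq_iInter {Ω : Type*} (B : ℕ → Ω → ℝ) (I T : Finset ℕ) :
    atomSet B I T = ⋂ i ∈ I, B i ⁻¹' {if i ∈ T then 1 else 0} := by
  ext ω; simp [atomSet]

private lemma atomSet_measurable {Ω : Type*} [MeasurableSpace Ω] {B : ℕ → Ω → ℝ}
    (hmeas : ∀ i, Measurable (B i)) (I T : Finset ℕ) :
    MeasurableSet (atomSet B I T) := by
  rw [atomSet_eq_iInter]
  exact MeasurableSet.biInter I.countable_toSet fun i _ => (hmeas i) (measurableSet_singleton _)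

private lemma atomSet_disjoint {Ω : Type*} {B : ℕ → Ω → ℝ} {I T T' : Finset ℕ}
    (hT : T ⊆ I) (hT' : T' ⊆ I) (hne : T ≠ T') :
    Disjoint (atomSet B I T) (atomSet B I T') := by
  rw [Set.disjoint_left]
  intro ω hω hω'
  apply hne
  ext i
  by_cases hiI : i ∈ I
  · have h12 : (if i ∈ T then (1 : ℝ) else 0) = if i ∈ T' then 1 else 0 := by
      rw [← hω i hiI, hω' i hiI]
    by_cases h : i ∈ T <;> by_cases h' : i ∈ T' <;> simp [h, h'] at h12 ⊢
  · exact iff_of_false (fun h => hiI (hT h)) (fun h => hiI (hT' h))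

private lemma atomSet_measure {Ω : Type*} [MeasurableSpace Ω] (μ : Measure Ω)
    [IsProbabilityMeasure μ] (ρ : ℝ) {B : ℕ → Ω → ℝ}
    (hmeas : ∀ i, Measurable (B i)) (h01 : ∀ i ω, B i ω = 0 ∨ B i ω = 1)
    (hber : ∀ i, μ {ω | B i ω = 1} = ENNReal.ofReal ρ)
    (hindep : iIndepFun B μ) {I T : Finset ℕ} (hT : T ⊆ I) :
    μ (atomSet B I T) =
      ENNReal.ofReal ρ ^ T.card * (1 - ENNReal.ofReal ρ) ^ (I.card - T.card) := by
  classical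
  have hB1 : ∀ i, μ (B i ⁻¹' {1}) = ENNReal.ofReal ρ := by
    intro i
    rw [← hber i]
    rfl
  have hB0 : ∀ i, μ (B i ⁻¹' {0}) = 1 - ENNReal.ofReal ρ := by
    intro i
    have hc : B i ⁻¹' {0} = (B i ⁻¹' {1})ᶜ := by
      ext ω
      simp only [Set.mem_preimage, Set.mem_singleton_iff, Set.mem_compl_iff]
      constructor
      · intro h h'
        rw [h'] at h
        norm_num at h
      · intro h
        rcases h01 i ω with h' | h'
        · exact h'
        · exact absurd h' h
    rw [hc, measure_compl ((hmeas i) (measurableSet_singleton _)) (measure_ne_top μ _),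
      measure_univ, hB1]
  have h1 : μ (atomSet B I T) = ∏ i ∈ I, μ (B i ⁻¹' {if i ∈ T then (1:ℝ) else 0}) := by
    rw [atomSet_eq_iInter]
    exact hindep.measure_inter_preimage_eq_mul I (fun i _ => measurableSet_singleton _)
  have h2 : ∀ i, μ (B i ⁻¹' {if i ∈ T then (1:ℝ) else 0}) =
      if i ∈ T then ENNReal.ofReal ρ else 1 - ENNReal.ofReal ρ := by
    intro i
    by_cases h : i ∈ T <;> simp [h, hB1, hB0]
  rw [h1, Finset.prod_congr rfl (fun i _ => h2 i),
    ← Finset.prod_filter_mul_prod_filter_not I (· ∈ T)]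
  have e1 : I.filter (· ∈ T) = T := by
    rw [Finset.filter_mem_eq_inter, Finset.inter_eq_right.2 hT]
  have e2 : I.filter (fun i => ¬ i ∈ T) = I \ T := (Finset.sdiff_eq_filter I T).symm
  rw [e1, e2, Finset.prod_ite_of_true (fun i hi => hi) _ _,
    Finset.prod_ite_of_false (fun i hi => (Finset.mem_sdiff.1 hi).2) _ _,
    Finset.prod_const, Finset.prod_const, Finset.card_sdiff_of_subset hT]

private lemma aux_ae_le {Ω : Type*} {m : MeasurableSpace Ω} [mΩ : MeasurableSpace Ω]
    (hm : m ≤ mΩ) (μ : Measure Ω) [IsFiniteMeasure μ] {f g : Ω → ℝ}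
    (hf : Integrable f μ) (hg : Integrable g μ)
    (hfm : Measurable[m] f) (hgm : Measurable[m] g)
    (h : ∀ s, MeasurableSet[m] s → ∫ x in s, f x ∂μ ≤ ∫ x in s, g x ∂μ) :
    f ≤ᵐ[μ] g := by
  have hsm : MeasurableSet[m] {x | g x < f x} := measurableSet_lt hgm hfm
  have hs : MeasurableSet {x | g x < f x} := hm _ hsm
  have hint : IntegrableOn (fun x => f x - g x) {x | g x < f x} μ := (hf.sub hg).integrableOn
  have hnonneg : 0 ≤ᵐ[μ.restrict {x | g x < f x}] fun x => f x - g x := by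
    filter_upwards [ae_restrict_mem hs] with x hx
    exact sub_nonneg.2 (le_of_lt hx)
  have hle : ∫ x in {x | g x < f x}, (f x - g x) ∂μ ≤ 0 := by
    rw [integral_sub hf.integrableOn hg.integrableOn]
    linarith [h _ hsm]
  have hμs : μ {x | g x < f x} = 0 := by
    by_contra hμ
    have hpos : 0 < μ (Function.support (fun x => f x - g x) ∩ {x | g x < f x}) := by
      have heq : Function.support (fun x => f x - g x) ∩ {x | g x < f x}
          = {x | g x < f x} := by
        apply Set.inter_eq_self_of_subset_right
        intro x hx
        simp only [Function.mem_support]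
        exact sub_ne_zero.2 (ne_of_gt hx)
      rw [heq]
      exact lt_of_le_of_ne zero_le (Ne.symm hμ)
    have := (setIntegral_pos_iff_support_of_nonneg_ae hnonneg hint).2 hpos
    linarith
  rw [Filter.EventuallyLE, ae_iff]
  convert hμs using 2
  ext x
  simp [not_le]

/-- For i.i.d. Bernoulli(ρ) variables `B 1, ..., B n`, the process
`M j = (1+j)/(1+S j)` with `S j = B 1 + ... + B j` is a super-martingale in reverse time
with respect to the reverse filtration `F j = σ(S j, B (j+1), ..., B n)`:
`E[M j | F (j+1)] ≤ M (j+1)` a.e. for all `1 ≤ j ≤ n - 1`. -/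
theorem reverse_supermartingale_bernoulli
    {Ω : Type*} [MeasurableSpace Ω] (μ : Measure Ω) [IsProbabilityMeasure μ]
    (n : ℕ) (ρ : ℝ) (hρ : 0 < ρ) (B : ℕ → Ω → ℝ)
    (hmeas : ∀ i, Measurable (B i))
    (h01 : ∀ i ω, B i ω = 0 ∨ B i ω = 1)
    (hber : ∀ i, μ {ω | B i ω = 1} = ENNReal.ofReal ρ)
    (hindep : iIndepFun B μ)
    (S : ℕ → Ω → ℝ) (hS : ∀ j ω, S j ω = ∑ i ∈ Finset.Icc 1 j, B i ω)
    (M : ℕ → Ω → ℝ) (hM : ∀ j ω, M j ω = (1 + (j : ℝ)) / (1 + S j ω))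
    (F : ℕ → MeasurableSpace Ω)
    (hF : ∀ j, F j = MeasurableSpace.comap (S j) inferInstance ⊔
        ⨆ i ∈ Finset.Ioc j n, MeasurableSpace.comap (B i) inferInstance) :
    ∀ j, 1 ≤ j → j ≤ n - 1 → μ[M j | F (j + 1)] ≤ᵐ[μ] M (j + 1) := by
  intro j hj1 hjle
  classical
  have hn : j + 1 ≤ n := by omega
  -- basic facts
  have hSfun : ∀ k, S k = fun ω => ∑ i ∈ Finset.Icc 1 k, B i ω := fun k => funext (hS k)
  have hSmeas : ∀ k, Measurable (S k) := by
    intro k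
    rw [hSfun k]
    exact Finset.measurable_sum _ fun i _ => hmeas i
  have hMfun : ∀ k, M k = fun ω => (1 + (k : ℝ)) / (1 + S k ω) := fun k => funext (hM k)
  have hMmeas : ∀ k, Measurable (M k) := by
    intro k
    rw [hMfun k]
    exact measurable_const.div (measurable_const.add (hSmeas k))
  have hSnonneg : ∀ k ω, 0 ≤ S k ω := by
    intro k ω
    rw [hS]
    exact Finset.sum_nonneg fun i _ => by rcases h01 i ω with h | h <;> simp [h]
  have hMbound : ∀ k ω, ‖M k ω‖ ≤ 1 + (k : ℝ) := by
    intro k ω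
    have h1 : (0:ℝ) < 1 + S k ω := by linarith [hSnonneg k ω]
    have h2 : (0:ℝ) ≤ 1 + (k:ℝ) := by positivity
    rw [hM, Real.norm_eq_abs, abs_of_nonneg (div_nonneg h2 h1.le), div_le_iff₀ h1]
    nlinarith [hSnonneg k ω]
  have hMint : ∀ k, Integrable (M k) μ := fun k =>
    (integrable_const (1 + (k:ℝ))).mono' (hMmeas k).aestronglyMeasurable
      (Filter.Eventually.of_forall (hMbound k))
  have hmle : F (j + 1) ≤ (inferInstance : MeasurableSpace Ω) := by
    rw [hF]
    exact sup_le (hSmeas (j+1)).comap_le (iSup₂_le fun i _ => (hmeas i).comap_le)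
  have hScomap : Measurable[F (j + 1)] (S (j+1)) :=
    Measurable.of_comap_le (by rw [hF]; exact le_sup_left)
  have hgm : Measurable[F (j + 1)] (M (j+1)) := by
    rw [hMfun]
    exact (measurable_const.div (measurable_const.add measurable_id)).comp hScomap
  -- index sets
  set P := Finset.Icc 1 (j+1) with hP
  set Q := Finset.Ioc (j+1) n with hQ
  set I := Finset.Icc 1 n with hI
  have hPI : P ∪ Q = I := by
    ext i
    rw [Finset.mem_union, hP, hQ, hI, Finset.mem_Icc, Finset.mem_Ioc, Finset.mem_Icc]
    omega
  have hPQ : Disjoint P Q := by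
    rw [Finset.disjoint_left]
    intro i hi hi'
    rw [hP, Finset.mem_Icc] at hi
    rw [hQ, Finset.mem_Ioc] at hi'
    omega
  have hPsub : P ⊆ I := hPI ▸ Finset.subset_union_left
  have hQsub : Q ⊆ I := hPI ▸ Finset.subset_union_right
  have hcardP : P.card = j + 1 := by rw [hP, Nat.card_Icc]; omega
  have hcardI : I.card = n := by rw [hI, Nat.card_Icc]; omega
  have hj1P : j + 1 ∈ P := by rw [hP, Finset.mem_Icc]; omega
  -- the atom map
  set κ : Ω → ℕ × Finset ℕ :=
    fun ω => ((P.filter fun i => B i ω = 1).card, Q.filter fun i => B i ω = 1) with hκ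
  have hScard : ∀ (k : ℕ) ω,
      S k ω = (((Finset.Icc 1 k).filter fun i => B i ω = 1).card : ℝ) := by
    intro k ω
    rw [hS]
    calc ∑ i ∈ Finset.Icc 1 k, B i ω
        = ∑ i ∈ Finset.Icc 1 k, (if B i ω = 1 then (1:ℝ) else 0) :=
          Finset.sum_congr rfl fun i _ => by rcases h01 i ω with h | h <;> simp [h]
      _ = _ := Finset.sum_boole _ _
  have hmκ : F (j + 1) ≤ MeasurableSpace.comap κ ⊤ := by
    rw [hF]
    apply sup_le
    · have hcomp : S (j+1) = (fun t : ℕ × Finset ℕ => (t.1 : ℝ)) ∘ κ := by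
        funext ω
        rw [hScard (j+1) ω]
        simp [hκ, hP]
      rw [hcomp, ← MeasurableSpace.comap_comp]
      exact MeasurableSpace.comap_mono le_top
    · refine iSup₂_le fun i hi => ?_
      have hiQ : i ∈ Q := by rw [hQ]; exact hi
      have hcomp : B i = (fun t : ℕ × Finset ℕ => if i ∈ t.2 then (1:ℝ) else 0) ∘ κ := by
        funext ω
        simp only [hκ, Function.comp_apply, Finset.mem_filter]
        rcases h01 i ω with h | h <;> simp [h, hiQ]
      rw [hcomp, ← MeasurableSpace.comap_comp]
      exact MeasurableSpace.comap_mono le_top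
  -- fiber representations
  have hfibrep : ∀ (s : ℕ) (U : Finset ℕ), U ⊆ Q →
      κ ⁻¹' {(s, U)} = ⋃ T₁ ∈ P.powersetCard s, atomSet B I (T₁ ∪ U) := by
    intro s U hU
    ext ω
    simp only [Set.mem_preimage, Set.mem_singleton_iff, Set.mem_iUnion, hκ, Prod.mk.injEq]
    constructor
    · rintro ⟨h1, h2⟩
      refine ⟨P.filter fun i => B i ω = 1, ?_, ?_⟩
      · rw [Finset.mem_powersetCard]
        exact ⟨Finset.filter_subset _ _, h1⟩
      · intro i hiI
        have hiPQ : i ∈ P ∨ i ∈ Q := by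
          rw [← hPI] at hiI
          exact Finset.mem_union.1 hiI
        by_cases hb : B i ω = 1
        · rw [hb, if_pos]
          rcases hiPQ with h | h
          · exact Finset.mem_union_left _ (Finset.mem_filter.2 ⟨h, hb⟩)
          · exact Finset.mem_union_right _ (h2 ▸ Finset.mem_filter.2 ⟨h, hb⟩)
        · have hb0 : B i ω = 0 := (h01 i ω).resolve_right hb
          rw [hb0, if_neg]
          intro hmem
          rcases Finset.mem_union.1 hmem with h | h
          · exact hb (Finset.mem_filter.1 h).2
          · rw [← h2] at h
            exact hb (Finset.mem_filter.1 h).2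
    · rintro ⟨T₁, hT₁, hω⟩
      rw [Finset.mem_powersetCard] at hT₁
      have hTP : P.filter (fun i => B i ω = 1) = T₁ := by
        ext i
        rw [Finset.mem_filter]
        constructor
        · rintro ⟨hiP, hb⟩
          have := hω i (hPsub hiP)
          rw [hb] at this
          by_cases hiu : i ∈ T₁ ∪ U
          · rcases Finset.mem_union.1 hiu with h | h
            · exact h
            · exact absurd (hU h) (Finset.disjoint_left.1 hPQ hiP)
          · rw [if_neg hiu] at this
            norm_num at this
        · intro hiT
          refine ⟨hT₁.1 hiT, ?_⟩
          have := hω i (hPsub (hT₁.1 hiT))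
          rw [if_pos (Finset.mem_union_left _ hiT)] at this
          exact this
      have hQU : Q.filter (fun i => B i ω = 1) = U := by
        ext i
        rw [Finset.mem_filter]
        constructor
        · rintro ⟨hiQ, hb⟩
          have := hω i (hQsub hiQ)
          rw [hb] at this
          by_cases hiu : i ∈ T₁ ∪ U
          · rcases Finset.mem_union.1 hiu with h | h
            · exact absurd (Finset.disjoint_left.1 hPQ (hT₁.1 h)) (fun hc => hc hiQ)
            · exact h
          · rw [if_neg hiu] at this
            norm_num at this
        · intro hiU
          refine ⟨hU hiU, ?_⟩
          have := hω i (hQsub (hU hiU))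
          rw [if_pos (Finset.mem_union_right _ hiU)] at this
          exact this
      exact ⟨by rw [hTP, hT₁.2], hQU⟩
  have hfibrep1 : ∀ (s : ℕ) (U : Finset ℕ), U ⊆ Q →
      κ ⁻¹' {(s, U)} ∩ B (j+1) ⁻¹' {1}
        = ⋃ T₁ ∈ (P.powersetCard s).filter (j+1 ∈ ·), atomSet B I (T₁ ∪ U) := by
    intro s U hU
    ext ω
    constructor
    · rintro ⟨hω, hb⟩
      rw [hfibrep s U hU] at hω
      simp only [Set.mem_iUnion] at hω ⊢
      obtain ⟨T₁, hT₁, hωa⟩ := hω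
      have hbb : B (j+1) ω = 1 := by simpa using hb
      have hj1T : j + 1 ∈ T₁ := by
        have := hωa (j+1) (hPsub hj1P)
        rw [hbb] at this
        by_cases hiu : j + 1 ∈ T₁ ∪ U
        · rcases Finset.mem_union.1 hiu with h | h
          · exact h
          · have := hU h
            rw [hQ, Finset.mem_Ioc] at this
            omega
        · rw [if_neg hiu] at this
          norm_num at this
      exact ⟨T₁, Finset.mem_filter.2 ⟨hT₁, hj1T⟩, hωa⟩
    · intro hω
      simp only [Set.mem_iUnion] at hω
      obtain ⟨T₁, hT₁, hωa⟩ := hω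
      rw [Finset.mem_filter] at hT₁
      constructor
      · rw [hfibrep s U hU]
        simp only [Set.mem_iUnion]
        exact ⟨T₁, hT₁.1, hωa⟩
      · have := hωa (j+1) (hPsub hj1P)
        rw [if_pos (Finset.mem_union_left _ hT₁.2)] at this
        simpa using this
  -- measure of unions of atoms
  have hμUnion : ∀ (s : ℕ) (U : Finset ℕ), U ⊆ Q → ∀ (Ps : Finset (Finset ℕ)),
      Ps ⊆ P.powersetCard s →
      μ (⋃ T₁ ∈ Ps, atomSet B I (T₁ ∪ U)) = Ps.card *
        (ENNReal.ofReal ρ ^ (s + U.card) *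
          (1 - ENNReal.ofReal ρ) ^ (n - (s + U.card))) := by
    intro s U hU Ps hPs
    have hsub : ∀ T₁ ∈ Ps, T₁ ∪ U ⊆ I := by
      intro T₁ hT₁
      have h := Finset.mem_powersetCard.1 (hPs hT₁)
      exact Finset.union_subset (h.1.trans hPsub) (hU.trans hQsub)
    have huninj : ∀ T₁ ∈ Ps, ∀ T₁' ∈ Ps, T₁ ∪ U = T₁' ∪ U → T₁ = T₁' := by
      have key : ∀ T₁ ∈ Ps, ∀ T₁' ∈ Ps, T₁ ∪ U = T₁' ∪ U → T₁ ⊆ T₁' := by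
        intro T₁ hT₁ T₁' hT₁' h i hi
        have h1 := Finset.mem_powersetCard.1 (hPs hT₁)
        have : i ∈ T₁' ∪ U := h ▸ Finset.mem_union_left _ hi
        rcases Finset.mem_union.1 this with h' | h'
        · exact h'
        · exact absurd (hU h') (Finset.disjoint_left.1 hPQ (h1.1 hi))
      intro T₁ hT₁ T₁' hT₁' h
      exact Finset.Subset.antisymm (key T₁ hT₁ T₁' hT₁' h) (key T₁' hT₁' T₁ hT₁ h.symm)
    rw [measure_biUnion_finset ?_ (fun T₁ _ => atomSet_measurable hmeas I _)]
    · have hval : ∀ T₁ ∈ Ps, μ (atomSet B I (T₁ ∪ U)) =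
          ENNReal.ofReal ρ ^ (s + U.card) *
            (1 - ENNReal.ofReal ρ) ^ (n - (s + U.card)) := by
        intro T₁ hT₁
        have h := Finset.mem_powersetCard.1 (hPs hT₁)
        have hcard : (T₁ ∪ U).card = s + U.card := by
          rw [Finset.card_union_of_disjoint
            (Finset.disjoint_of_subset_left h.1 (Finset.disjoint_of_subset_right hU hPQ)),
            h.2]
        rw [atomSet_measure μ ρ hmeas h01 hber hindep (hsub T₁ hT₁), hcard, hcardI]
      rw [Finset.sum_congr rfl hval, Finset.sum_const, nsmul_eq_mul]
    · intro T₁ h1 T₁' h1' hne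
      exact atomSet_disjoint (hsub T₁ h1) (hsub T₁' h1')
        (fun h => hne (huninj T₁ h1 T₁' h1' h))
  -- cardinality of the filtered powersetCard
  have hcard1 : ∀ s : ℕ, 1 ≤ s →
      ((P.powersetCard s).filter (j+1 ∈ ·)).card = Nat.choose j (s-1) := by
    intro s hs
    have hIccP : P.erase (j+1) = Finset.Icc 1 j := by
      ext i
      rw [Finset.mem_erase, hP, Finset.mem_Icc, Finset.mem_Icc]
      omega
    have hcard' : ((Finset.Icc 1 j).powersetCard (s-1)).card = Nat.choose j (s-1) := by
      rw [Finset.card_powersetCard, Nat.card_Icc, Nat.add_sub_cancel]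
    rw [← hcard']
    refine Finset.card_bij' (fun (T : Finset ℕ) _ => T.erase (j+1)) (fun (T : Finset ℕ) _ => insert (j+1) T)
      ?_ ?_ ?_ ?_
    · intro T hT
      rw [Finset.mem_filter, Finset.mem_powersetCard] at hT
      rw [Finset.mem_powersetCard]
      constructor
      · rw [← hIccP]
        exact Finset.erase_subset_erase _ hT.1.1
      · rw [Finset.card_erase_of_mem hT.2, hT.1.2]
    · intro T hT
      rw [Finset.mem_powersetCard] at hT
      have hnotmem : j + 1 ∉ T := by
        intro h
        have := hT.1 h
        rw [Finset.mem_Icc] at this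
        omega
      rw [Finset.mem_filter, Finset.mem_powersetCard]
      refine ⟨⟨?_, ?_⟩, Finset.mem_insert_self _ _⟩
      · refine Finset.insert_subset hj1P ?_
        refine hT.1.trans ?_
        rw [← hIccP]
        exact Finset.erase_subset _ _
      · rw [Finset.card_insert_of_notMem hnotmem, hT.2]
        omega
    · intro T hT
      rw [Finset.mem_filter] at hT
      exact Finset.insert_erase hT.2
    · intro T hT
      rw [Finset.mem_powersetCard] at hT
      have hnotmem : j + 1 ∉ T := by
        intro h
        have := hT.1 h
        rw [Finset.mem_Icc] at this
        omega
      exact Finset.erase_insert hnotmem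
  -- fibers are measurable
  have hfibmeas : ∀ s U, U ⊆ Q → MeasurableSet (κ ⁻¹' {(s, U)}) := by
    intro s U hU
    rw [hfibrep s U hU]
    exact (P.powersetCard s).measurableSet_biUnion
      fun T₁ _ => atomSet_measurable hmeas I _
  -- the sum decomposition S (j+1) = S j + B (j+1)
  have hstep : ∀ ω, S (j+1) ω = S j ω + B (j+1) ω := by
    intro ω
    have hins : Finset.Icc 1 (j+1) = insert (j+1) (Finset.Icc 1 j) := by
      ext i
      rw [Finset.mem_Icc, Finset.mem_insert, Finset.mem_Icc]
      omega
    have hnm : j + 1 ∉ Finset.Icc 1 j := by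
      rw [Finset.mem_Icc]
      omega
    rw [hS, hS, hins, Finset.sum_insert hnm]
    ring
  -- main estimate
  refine aux_ae_le hmle μ integrable_condExp (hMint (j+1))
    stronglyMeasurable_condExp.measurable hgm ?_
  intro A hA
  rw [setIntegral_condExp hmle (hMint j) hA]
  obtain ⟨E, -, rfl⟩ := MeasurableSpace.measurableSet_comap.1 (hmκ A hA)
  set R : Finset (ℕ × Finset ℕ) := (Finset.range (j+2)) ×ˢ Q.powerset with hR
  set Efin : Finset (ℕ × Finset ℕ) := R.filter (· ∈ E) with hEfin
  have hrange : ∀ ω, κ ω ∈ R := by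
    intro ω
    rw [hR, Finset.mem_product]
    constructor
    · simp only [hκ, Finset.mem_range]
      have h := Finset.card_filter_le P (fun i => B i ω = 1)
      rw [hcardP] at h
      omega
    · simp only [hκ]
      exact Finset.mem_powerset.2 (Finset.filter_subset _ _)
  have hdecomp : κ ⁻¹' E = ⋃ t ∈ Efin, κ ⁻¹' {t} := by
    ext ω
    simp only [Set.mem_preimage, Set.mem_iUnion, Set.mem_singleton_iff, hEfin,
      Finset.mem_filter]
    constructor
    · intro h
      exact ⟨κ ω, ⟨hrange ω, h⟩, rfl⟩
    · rintro ⟨t, ⟨-, ht⟩, rfl⟩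
      exact ht
  have hUofmem : ∀ t ∈ Efin, t.2 ⊆ Q := by
    intro t ht
    have := (Finset.mem_filter.1 ht).1
    rw [hR, Finset.mem_product] at this
    exact Finset.mem_powerset.1 this.2
  have hfibmeas' : ∀ t ∈ Efin, MeasurableSet (κ ⁻¹' {t}) := by
    intro t ht
    have := hfibmeas t.1 t.2 (hUofmem t ht)
    simpa using this
  have hpairwise : Set.Pairwise ↑Efin (Function.onFun Disjoint fun t => κ ⁻¹' {t}) := by
    intro t _ t' _ hne
    simp only [Function.onFun]
    rw [Set.disjoint_left]
    intro ω h h'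
    simp only [Set.mem_preimage, Set.mem_singleton_iff] at h h'
    exact hne (h.symm.trans h')
  rw [hdecomp,
    integral_biUnion_finset Efin hfibmeas' hpairwise (fun t _ => (hMint j).integrableOn),
    integral_biUnion_finset Efin hfibmeas' hpairwise (fun t _ => (hMint (j+1)).integrableOn)]
  refine Finset.sum_le_sum ?_
  rintro ⟨s, U⟩ ht
  have htR : (s, U) ∈ R := (Finset.mem_filter.1 ht).1
  rw [hR, Finset.mem_product] at htR
  have hs : s ≤ j + 1 := by
    have := Finset.mem_range.1 htR.1
    omega
  have hU : U ⊆ Q := Finset.mem_powerset.1 htR.2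
  set G : Set Ω := κ ⁻¹' {(s, U)} with hG
  set G1 : Set Ω := G ∩ B (j+1) ⁻¹' {1} with hG1
  set G0 : Set Ω := G ∩ B (j+1) ⁻¹' {0} with hG0
  have hGmeas : MeasurableSet G := hfibmeas s U hU
  have hG1meas : MeasurableSet G1 := hGmeas.inter ((hmeas _) (measurableSet_singleton _))
  have hG0meas : MeasurableSet G0 := hGmeas.inter ((hmeas _) (measurableSet_singleton _))
  have hsplit : G = G1 ∪ G0 := by
    rw [hG1, hG0, ← Set.inter_union_distrib_left]
    refine (Set.inter_eq_left.2 ?_).symm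
    intro ω _
    rcases h01 (j+1) ω with h | h
    · right
      simp [h]
    · left
      simp [h]
  have hdisj01 : Disjoint G1 G0 := by
    rw [Set.disjoint_left]
    rintro ω ⟨-, h1⟩ ⟨-, h0⟩
    simp only [Set.mem_preimage, Set.mem_singleton_iff] at h1 h0
    rw [h1] at h0
    norm_num at h0
  -- measures of G and G1
  have hμG : μ G = ((j+1).choose s) *
      (ENNReal.ofReal ρ ^ (s + U.card) *
        (1 - ENNReal.ofReal ρ) ^ (n - (s + U.card))) := by
    rw [hG, hfibrep s U hU, hμUnion s U hU _ (subset_refl _),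
      Finset.card_powersetCard, hcardP]
  have hkey : (((j+1 : ℕ)) : ENNReal) * μ G1 = ((s : ℕ) : ENNReal) * μ G := by
    rcases Nat.eq_zero_or_pos s with hs0 | hs1
    · subst hs0
      have hG1empty : μ G1 = 0 := by
        rw [hG1, hG, hfibrep1 0 U hU]
        have : (P.powersetCard 0).filter (j+1 ∈ ·) = ∅ := by
          rw [Finset.powersetCard_zero]
          simp [Finset.filter_singleton]
        rw [this]
        simp
      rw [hG1empty]
      simp
    · have hμG1 : μ G1 = (j.choose (s-1)) *
          (ENNReal.ofReal ρ ^ (s + U.card) *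
            (1 - ENNReal.ofReal ρ) ^ (n - (s + U.card))) := by
        rw [hG1, hG, hfibrep1 s U hU, hμUnion s U hU _ (Finset.filter_subset _ _),
          hcard1 s hs1]
      have hnat : (j+1) * Nat.choose j (s-1) = s * Nat.choose (j+1) s := by
        have h := Nat.add_one_mul_choose_eq j (s-1)
        have hs' : s - 1 + 1 = s := by omega
        rw [hs'] at h
        rw [h, Nat.mul_comm]
      have hcast : ((j+1 : ℕ) : ENNReal) * (j.choose (s-1) : ENNReal)
          = ((s : ℕ) : ENNReal) * ((j+1).choose s : ENNReal) := by
        exact_mod_cast hnat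
      rw [hμG1, hμG, ← mul_assoc, hcast, mul_assoc]
  -- real-valued quantities
  set a := (μ G1).toReal with ha_def
  set b := (μ G0).toReal with hb_def
  have ha : 0 ≤ a := ENNReal.toReal_nonneg
  have hb : 0 ≤ b := ENNReal.toReal_nonneg
  have hab : (μ G).toReal = a + b := by
    rw [hsplit, measure_union hdisj01 hG0meas,
      ENNReal.toReal_add (measure_ne_top μ _) (measure_ne_top μ _)]
  have hkeyR : ((j:ℝ)+1) * a = (s:ℝ) * (a + b) := by
    have h := congrArg ENNReal.toReal hkey
    rw [ENNReal.toReal_mul, ENNReal.toReal_mul, ENNReal.toReal_natCast, ENNReal.toReal_natCast,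
      hab] at h
    push_cast at h
    linarith [h]
  -- values on the pieces
  have hSonG : ∀ ω ∈ G, S (j+1) ω = (s:ℝ) := by
    intro ω hω
    rw [hG, Set.mem_preimage, Set.mem_singleton_iff] at hω
    have h1 : ((P.filter fun i => B i ω = 1).card : ℕ) = s := congrArg Prod.fst hω
    rw [hScard (j+1) ω, ← hP, h1]
  have hMjG1 : Set.EqOn (M j) (fun _ => (1 + (j:ℝ)) / (s:ℝ)) G1 := by
    intro ω hω
    have hωG : ω ∈ G := hω.1
    have hbb : B (j+1) ω = 1 := by
      have := hω.2
      simpa using this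
    have h1 : S j ω = (s:ℝ) - 1 := by
      have h := hstep ω
      rw [hSonG ω hωG, hbb] at h
      linarith
    rw [hM, h1]
    congr 1
    ring
  have hMjG0 : Set.EqOn (M j) (fun _ => (1 + (j:ℝ)) / (1 + (s:ℝ))) G0 := by
    intro ω hω
    have hωG : ω ∈ G := hω.1
    have hbb : B (j+1) ω = 0 := by
      have := hω.2
      simpa using this
    have h1 : S j ω = (s:ℝ) := by
      have h := hstep ω
      rw [hSonG ω hωG, hbb] at h
      linarith
    rw [hM, h1]
  have hMG : Set.EqOn (M (j+1)) (fun _ => (1 + ((j+1:ℕ):ℝ)) / (1 + (s:ℝ))) G := by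
    intro ω hω
    rw [hM, hSonG ω hω]
  -- the integral computation
  calc ∫ ω in G, M j ω ∂μ
      = ∫ ω in G1, M j ω ∂μ + ∫ ω in G0, M j ω ∂μ := by
        rw [hsplit, setIntegral_union hdisj01 hG0meas
          ((hMint j).integrableOn) ((hMint j).integrableOn)]
    _ = ((1 + (j:ℝ)) / (s:ℝ)) * a + ((1 + (j:ℝ)) / (1 + (s:ℝ))) * b := by
        rw [setIntegral_congr_fun hG1meas hMjG1, setIntegral_congr_fun hG0meas hMjG0,
          setIntegral_const, setIntegral_const, smul_eq_mul, smul_eq_mul, measureReal_def, measureReal_def, ← ha_def, ← hb_def]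
        ring
    _ ≤ ((1 + ((j+1:ℕ):ℝ)) / (1 + (s:ℝ))) * (a + b) := by
        rcases Nat.eq_zero_or_pos s with hs0 | hs1
        · subst hs0
          have ha0 : a = 0 := by
            push_cast at hkeyR
            nlinarith [hkeyR]
          rw [ha0]
          push_cast
          norm_num
          nlinarith [hb]
        · have hs0 : (0:ℝ) < (s:ℝ) := by exact_mod_cast hs1
          have h1s : (0:ℝ) < 1 + (s:ℝ) := by linarith
          apply le_of_eq
          push_cast
          field_simp
          ring_nf
          nlinarith [hkeyR]
    _ = ∫ ω in G, M (j+1) ω ∂μ := by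
        rw [setIntegral_congr_fun hGmeas hMG, setIntegral_const, smul_eq_mul, measureReal_def, hab]
        ring
end

section
/- Let B_1,...,B_n be i.i.d. Bernoulli(ρ) random variables with ρ > 0, and let J be a stopping time in reverse time with respect to the filtration F_j = σ(B_1 + ... + B_j, B_{j+1}, ..., B_n). Then E[(1+J)/(1+B_1+...+B_J)] ≤ ρ^{-1}. -/
open MeasureTheory ProbabilityTheory

open Finset

private lemma rsb_sum_w (ρ : ℝ) (u : Finset ℕ) :
    ∑ s ∈ u.powerset, ρ ^ s.card * (1 - ρ) ^ (u.card - s.card) = 1 := by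
  have h := Finset.prod_add (fun _ : ℕ => ρ) (fun _ : ℕ => 1 - ρ) u
  simp only [Finset.prod_const] at h
  rw [show ρ + (1 - ρ) = 1 by ring, one_pow] at h
  calc ∑ s ∈ u.powerset, ρ ^ s.card * (1 - ρ) ^ (u.card - s.card)
      = ∑ s ∈ u.powerset, ρ ^ s.card * (1 - ρ) ^ ((u \ s).card) := by
        refine Finset.sum_congr rfl fun s hs => ?_
        rw [Finset.card_sdiff_of_subset (Finset.mem_powerset.mp hs)]
    _ = 1 := h.symm

private lemma rsb_zero_sum (ρ : ℝ) (n m : ℕ) (hm : m ≤ n) :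
    ∑ s ∈ (Finset.Icc 1 n).powerset,
      (if s ∩ Finset.Icc 1 m = ∅ then ρ ^ s.card * (1 - ρ) ^ (n - s.card) else 0)
      = (1 - ρ) ^ m := by
  rw [← Finset.sum_filter]
  have hset : ((Finset.Icc 1 n).powerset).filter (fun s => s ∩ Finset.Icc 1 m = ∅)
      = (Finset.Ioc m n).powerset := by
    ext s
    simp only [Finset.mem_filter, Finset.mem_powerset, Finset.eq_empty_iff_forall_notMem,
      Finset.mem_inter, Finset.mem_Icc, Finset.mem_Ioc, Finset.subset_iff]
    constructor
    · rintro ⟨h1, h2⟩ x hx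
      have := h1 hx
      have := h2 x
      constructor <;> [skip; omega]
      by_contra hxm
      exact (h2 x) ⟨hx, by omega⟩
    · intro h
      refine ⟨fun x hx => ?_, fun x ⟨hx, hx2⟩ => ?_⟩
      · have := h hx; omega
      · have := h hx; omega
  rw [hset]
  have hcard : ∀ s ∈ (Finset.Ioc m n).powerset, n - s.card = m + ((n - m) - s.card) := by
    intro s hs
    have h1 : s.card ≤ (Finset.Ioc m n).card := Finset.card_le_card (Finset.mem_powerset.mp hs)
    rw [Nat.card_Ioc] at h1
    omega
  calc ∑ s ∈ (Finset.Ioc m n).powerset, ρ ^ s.card * (1 - ρ) ^ (n - s.card)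
      = ∑ s ∈ (Finset.Ioc m n).powerset, (1 - ρ) ^ m * (ρ ^ s.card * (1 - ρ) ^ ((n - m) - s.card)) := by
        refine Finset.sum_congr rfl fun s hs => ?_
        rw [hcard s hs, pow_add]; ring
    _ = (1 - ρ) ^ m := by
        rw [← Finset.mul_sum]
        have := rsb_sum_w ρ (Finset.Ioc m n)
        rw [Nat.card_Ioc] at this
        rw [this, mul_one]


private lemma rsb_swap_mem {i m x : ℕ} (hi1 : 1 ≤ i) (him : i ≤ m) (hx : x ∈ Finset.Icc 1 m) :
    (Equiv.swap i m) x ∈ Finset.Icc 1 m := by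
  rcases eq_or_ne x i with rfl | hxi
  · rw [Equiv.swap_apply_left]; simp only [Finset.mem_Icc]; omega
  rcases eq_or_ne x m with rfl | hxm
  · rw [Equiv.swap_apply_right]; simp only [Finset.mem_Icc]; omega
  · rwa [Equiv.swap_apply_of_ne_of_ne hxi hxm]

private lemma rsb_exchange (ρ : ℝ) (n m i : ℕ) (hi1 : 1 ≤ i) (him : i ≤ m) (hmn : m ≤ n)
    (H : Finset ℕ → ℝ)
    (hH : ∀ s ∈ (Finset.Icc 1 n).powerset, ∀ t ∈ (Finset.Icc 1 n).powerset,
      (s ∩ Finset.Icc 1 m).card = (t ∩ Finset.Icc 1 m).card →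
      s ∩ Finset.Ioc m n = t ∩ Finset.Ioc m n → H s = H t) :
    ∑ s ∈ (Finset.Icc 1 n).powerset,
        (ρ ^ s.card * (1 - ρ) ^ (n - s.card)) * H s * (if i ∈ s then 1 else 0)
    = ∑ s ∈ (Finset.Icc 1 n).powerset,
        (ρ ^ s.card * (1 - ρ) ^ (n - s.card)) * H s * (if m ∈ s then 1 else 0) := by
  classical
  set σ := Equiv.swap i m with hσ
  have hm1 : 1 ≤ m := le_trans hi1 him
  have hmem : ∀ (x : ℕ) (s : Finset ℕ), x ∈ s.image σ ↔ σ x ∈ s := by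
    intro x s
    constructor
    · rintro h
      obtain ⟨y, hy, hyx⟩ := Finset.mem_image.mp h
      rwa [← hyx, Equiv.swap_apply_self]
    · intro h
      exact Finset.mem_image.mpr ⟨σ x, h, Equiv.swap_apply_self _ _ _⟩
  have hmaps : ∀ s ∈ (Finset.Icc 1 n).powerset, s.image σ ∈ (Finset.Icc 1 n).powerset := by
    intro s hs
    rw [Finset.mem_powerset] at hs ⊢
    intro x hx
    obtain ⟨y, hy, rfl⟩ := Finset.mem_image.mp hx
    have hy' := hs hy
    simp only [Finset.mem_Icc] at hy' ⊢
    rcases eq_or_ne y i with rfl | hyi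
    · rw [hσ, Equiv.swap_apply_left]; omega
    rcases eq_or_ne y m with rfl | hym
    · rw [hσ, Equiv.swap_apply_right]; omega
    · rw [hσ, Equiv.swap_apply_of_ne_of_ne hyi hym]; omega
  have hinv : ∀ s : Finset ℕ, (s.image σ).image σ = s := by
    intro s
    rw [Finset.image_image]
    have : σ ∘ σ = id := by funext x; simp [hσ, Equiv.swap_apply_self]
    rw [this, Finset.image_id]
  have hcard : ∀ s : Finset ℕ, (s.image σ).card = s.card := fun s =>
    Finset.card_image_of_injective s σ.injective
  have hIcc : ∀ s : Finset ℕ, ((s.image σ) ∩ Finset.Icc 1 m) = (s ∩ Finset.Icc 1 m).image σ := by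
    intro s
    ext x
    simp only [Finset.mem_inter, hmem]
    constructor
    · rintro ⟨h1, h2⟩
      exact ⟨h1, rsb_swap_mem hi1 him h2⟩
    · rintro ⟨h1, h2⟩
      refine ⟨h1, ?_⟩
      have := rsb_swap_mem hi1 him h2
      rwa [Equiv.swap_apply_self] at this
  have hIoc : ∀ s : Finset ℕ, ((s.image σ) ∩ Finset.Ioc m n) = s ∩ Finset.Ioc m n := by
    intro s
    ext x
    simp only [Finset.mem_inter, hmem, Finset.mem_Ioc]
    constructor
    · rintro ⟨h1, h2⟩
      rw [hσ, Equiv.swap_apply_of_ne_of_ne (by omega) (by omega)] at h1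
      exact ⟨h1, h2⟩
    · rintro ⟨h1, h2⟩
      rw [hσ, Equiv.swap_apply_of_ne_of_ne (by omega) (by omega)]
      exact ⟨h1, h2⟩
  refine Finset.sum_nbij' (fun s => s.image σ) (fun s => s.image σ) hmaps hmaps
    (fun s _ => hinv s) (fun s _ => hinv s) ?_
  intro s hs
  have h1 : ρ ^ (s.image σ).card * (1 - ρ) ^ (n - (s.image σ).card)
      = ρ ^ s.card * (1 - ρ) ^ (n - s.card) := by rw [hcard]
  have h2 : H (s.image σ) = H s := by
    refine hH _ (hmaps s hs) _ hs ?_ ?_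
    · rw [hIcc, Finset.card_image_of_injective _ σ.injective]
    · exact hIoc s
  have h3 : (if m ∈ s.image σ then (1:ℝ) else 0) = (if i ∈ s then 1 else 0) := by
    simp only [hmem]
    simp only [hσ, Equiv.swap_apply_right]
  rw [h1, h2, h3]


private lemma rsb_keystep (ρ : ℝ) (hρ0 : 0 ≤ ρ) (hρ1 : ρ ≤ 1) (n j : ℕ) (hj : 1 ≤ j)
    (hjn : j + 1 ≤ n) (A : Finset ℕ → Prop) [DecidablePred A]
    (hA : ∀ s ∈ (Finset.Icc 1 n).powerset, ∀ t ∈ (Finset.Icc 1 n).powerset,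
      (s ∩ Finset.Icc 1 (j+1)).card = (t ∩ Finset.Icc 1 (j+1)).card →
      s ∩ Finset.Ioc (j+1) n = t ∩ Finset.Ioc (j+1) n → (A s ↔ A t)) :
    (∑ s ∈ (Finset.Icc 1 n).powerset,
      (if A s then (ρ ^ s.card * (1 - ρ) ^ (n - s.card)) *
        ((2 + (j:ℝ)) / (1 + ((s ∩ Finset.Icc 1 (j+1)).card : ℝ))) else 0)) - (1 - ρ) ^ (j+1)
    ≤ ∑ s ∈ (Finset.Icc 1 n).powerset,
      (if A s then (ρ ^ s.card * (1 - ρ) ^ (n - s.card)) *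
        ((1 + (j:ℝ)) / (1 + ((s ∩ Finset.Icc 1 j).card : ℝ))) else 0) := by
  classical
  set P := (Finset.Icc 1 n).powerset with hP
  set w : Finset ℕ → ℝ := fun s => ρ ^ s.card * (1 - ρ) ^ (n - s.card) with hw
  set k : Finset ℕ → ℕ := fun s => (s ∩ Finset.Icc 1 (j+1)).card with hk
  set H : Finset ℕ → ℝ := fun s => (if A s then 1 else 0) * (((k s : ℝ))⁻¹ - (1 + (k s : ℝ))⁻¹)
    with hH
  have hwnn : ∀ s, 0 ≤ w s := by
    intro s
    have h1 : (0:ℝ) ≤ 1 - ρ := by linarith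
    positivity
  -- finset facts
  have hkj : ∀ s : Finset ℕ, (j+1) ∉ s → s ∩ Finset.Icc 1 j = s ∩ Finset.Icc 1 (j+1) := by
    intro s hm
    ext x
    simp only [Finset.mem_inter, Finset.mem_Icc]
    constructor
    · rintro ⟨h1, h2, h3⟩; exact ⟨h1, h2, by omega⟩
    · rintro ⟨h1, h2, h3⟩
      refine ⟨h1, h2, ?_⟩
      rcases eq_or_ne x (j+1) with rfl | hne
      · exact absurd h1 hm
      · omega
  have hkm : ∀ s : Finset ℕ, (j+1) ∈ s → k s = (s ∩ Finset.Icc 1 j).card + 1 := by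
    intro s hm
    have : s ∩ Finset.Icc 1 (j+1) = insert (j+1) (s ∩ Finset.Icc 1 j) := by
      ext x
      simp only [Finset.mem_inter, Finset.mem_Icc, Finset.mem_insert]
      constructor
      · rintro ⟨h1, h2, h3⟩
        rcases eq_or_ne x (j+1) with rfl | hne
        · exact Or.inl rfl
        · exact Or.inr ⟨h1, h2, by omega⟩
      · rintro (rfl | ⟨h1, h2, h3⟩)
        · exact ⟨hm, by omega, le_refl _⟩
        · exact ⟨h1, h2, by omega⟩
    rw [hk]
    simp only
    rw [this, Finset.card_insert_of_notMem]
    simp only [Finset.mem_inter, Finset.mem_Icc]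
    rintro ⟨-, -, h⟩
    omega
  -- Step 1
  have E1 : ∑ s ∈ P,
      (if A s then w s * ((1 + (j:ℝ)) / (1 + ((s ∩ Finset.Icc 1 j).card : ℝ))) else 0)
      = (∑ s ∈ P, (if A s then w s * ((1 + (j:ℝ)) / (1 + (k s : ℝ))) else 0))
        + (1 + (j:ℝ)) * ∑ s ∈ P, w s * H s * (if (j+1) ∈ s then 1 else 0) := by
    rw [Finset.mul_sum, ← Finset.sum_add_distrib]
    refine Finset.sum_congr rfl fun s hs => ?_
    by_cases hm : (j+1) ∈ s
    · by_cases hAs : A s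
      · rw [if_pos hAs, if_pos hAs, if_pos hm, hH]
        simp only [if_pos hAs]
        rw [hkm s hm]
        set K := (s ∩ Finset.Icc 1 j).card
        have h1 : (1 + (K:ℝ)) ≠ 0 := by positivity
        have h2 : (1 + ((K:ℝ) + 1)) ≠ 0 := by positivity
        have h3 : ((K:ℝ) + 1) ≠ 0 := by positivity
        push_cast
        field_simp
        ring
      · simp only [if_neg hAs, hH, if_neg hAs]
        ring
    · rw [hkj s hm, if_neg hm]
      ring
  -- Step 2 : exchange
  have hHinv : ∀ s ∈ P, ∀ t ∈ P,
      (s ∩ Finset.Icc 1 (j+1)).card = (t ∩ Finset.Icc 1 (j+1)).card →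
      s ∩ Finset.Ioc (j+1) n = t ∩ Finset.Ioc (j+1) n → H s = H t := by
    intro s hs t ht h1 h2
    have hAst := hA s hs t ht h1 h2
    rw [hH]
    simp only
    rw [show k s = k t from h1]
    by_cases hAs : A s
    · rw [if_pos hAs, if_pos (hAst.mp hAs)]
    · rw [if_neg hAs, if_neg (fun h => hAs (hAst.mpr h))]
  have E2 : (1 + (j:ℝ)) * ∑ s ∈ P, w s * H s * (if (j+1) ∈ s then 1 else 0)
      = ∑ s ∈ P, w s * H s * (k s : ℝ) := by
    have hxchg : ∀ i ∈ Finset.Icc 1 (j+1),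
        (∑ s ∈ P, w s * H s * (if i ∈ s then 1 else 0))
        = ∑ s ∈ P, w s * H s * (if (j+1) ∈ s then 1 else 0) := by
      intro i hi
      rw [Finset.mem_Icc] at hi
      exact rsb_exchange ρ n (j+1) i hi.1 hi.2 hjn H hHinv
    have hsum1 : ∑ i ∈ Finset.Icc 1 (j+1), ∑ s ∈ P, w s * H s * (if i ∈ s then 1 else 0)
        = ((j+1 : ℕ) : ℝ) * ∑ s ∈ P, w s * H s * (if (j+1) ∈ s then 1 else 0) := by
      rw [Finset.sum_congr rfl hxchg, Finset.sum_const, Nat.card_Icc, nsmul_eq_mul]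
      norm_num
    have hsum2 : ∑ i ∈ Finset.Icc 1 (j+1), ∑ s ∈ P, w s * H s * (if i ∈ s then 1 else 0)
        = ∑ s ∈ P, w s * H s * (k s : ℝ) := by
      rw [Finset.sum_comm]
      refine Finset.sum_congr rfl fun s hs => ?_
      rw [← Finset.mul_sum, Finset.sum_boole, Finset.filter_mem_eq_inter, Finset.inter_comm]
    have hcast : (1 + (j:ℝ)) = ((j+1 : ℕ) : ℝ) := by push_cast; ring
    rw [hcast, ← hsum1, hsum2]
  -- Step 3 : pointwise combine
  have E3 : ∀ s ∈ P,
      (if A s then w s * ((1 + (j:ℝ)) / (1 + (k s : ℝ))) else 0) + w s * H s * (k s : ℝ)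
      = (if A s then w s * ((2 + (j:ℝ)) / (1 + (k s : ℝ))) else 0)
        - (if A s then (if k s = 0 then w s else 0) else 0) := by
    intro s hs
    by_cases hAs : A s
    · rw [if_pos hAs, if_pos hAs, if_pos hAs, hH]
      simp only [if_pos hAs, one_mul]
      by_cases hk0 : k s = 0
      · rw [if_pos hk0, hk0]
        norm_num
        ring
      · rw [if_neg hk0]
        have h1 : ((k s : ℝ)) ≠ 0 := Nat.cast_ne_zero.mpr hk0
        have h2 : (1 + (k s : ℝ)) ≠ 0 := by positivity
        field_simp
        ring
    · simp only [if_neg hAs, hH, if_neg hAs]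
      ring
  have E3' : (∑ s ∈ P, (if A s then w s * ((1 + (j:ℝ)) / (1 + (k s : ℝ))) else 0))
        + ∑ s ∈ P, w s * H s * (k s : ℝ)
      = (∑ s ∈ P, (if A s then w s * ((2 + (j:ℝ)) / (1 + (k s : ℝ))) else 0))
        - ∑ s ∈ P, (if A s then (if k s = 0 then w s else 0) else 0) := by
    rw [← Finset.sum_add_distrib, ← Finset.sum_sub_distrib]
    exact Finset.sum_congr rfl E3
  -- correction bound
  have hcorr : ∑ s ∈ P, (if A s then (if k s = 0 then w s else 0) else 0) ≤ (1 - ρ) ^ (j+1) := by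
    rw [← rsb_zero_sum ρ n (j+1) hjn]
    refine Finset.sum_le_sum fun s hs => ?_
    by_cases hemp : s ∩ Finset.Icc 1 (j+1) = ∅
    · have hk0 : k s = 0 := by rw [hk]; simp [hemp]
      rw [if_pos hemp]
      by_cases hAs : A s
      · rw [if_pos hAs, if_pos hk0]
      · rw [if_neg hAs]; exact hwnn s
    · have hk0 : k s ≠ 0 := by
        rw [hk]
        simp only [ne_eq, Finset.card_eq_zero]
        exact hemp
      rw [if_neg hemp]
      by_cases hAs : A s
      · rw [if_pos hAs, if_neg hk0]
      · rw [if_neg hAs]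
  -- assemble
  have hfin : (∑ s ∈ P,
      (if A s then w s * ((1 + (j:ℝ)) / (1 + ((s ∩ Finset.Icc 1 j).card : ℝ))) else 0))
      = (∑ s ∈ P, (if A s then w s * ((2 + (j:ℝ)) / (1 + (k s : ℝ))) else 0))
        - ∑ s ∈ P, (if A s then (if k s = 0 then w s else 0) else 0) := by
    rw [E1, E2, E3']
  rw [hfin]
  have : (∑ s ∈ P, (if A s then w s * ((2 + (j:ℝ)) / (1 + ((s ∩ Finset.Icc 1 (j+1)).card : ℝ))) else 0))
      = ∑ s ∈ P, (if A s then w s * ((2 + (j:ℝ)) / (1 + (k s : ℝ))) else 0) := rfl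
  rw [this]
  linarith

private lemma rsb_mono (s t : Finset ℕ) (j j' n : ℕ) (hjj' : j ≤ j') (hj'n : j' ≤ n)
    (h1 : (s ∩ Finset.Icc 1 j).card = (t ∩ Finset.Icc 1 j).card)
    (h2 : s ∩ Finset.Ioc j n = t ∩ Finset.Ioc j n) :
    (s ∩ Finset.Icc 1 j').card = (t ∩ Finset.Icc 1 j').card ∧
      s ∩ Finset.Ioc j' n = t ∩ Finset.Ioc j' n := by
  have hmem : ∀ x, x ∈ Finset.Ioc j n → (x ∈ s ↔ x ∈ t) := by
    intro x hx
    have h := Finset.ext_iff.mp h2 x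
    simp only [Finset.mem_inter] at h
    constructor
    · intro hxs; exact (h.mp ⟨hxs, hx⟩).1
    · intro hxt; exact (h.mpr ⟨hxt, hx⟩).1
  constructor
  · have hsplit : ∀ u : Finset ℕ,
        u ∩ Finset.Icc 1 j' = (u ∩ Finset.Icc 1 j) ∪ (u ∩ Finset.Ioc j j') := by
      intro u; ext x
      simp only [Finset.mem_union, Finset.mem_inter, Finset.mem_Icc, Finset.mem_Ioc]
      constructor
      · rintro ⟨ha, hb, hc⟩
        by_cases hxle : x ≤ j
        · exact Or.inl ⟨ha, hb, hxle⟩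
        · exact Or.inr ⟨ha, by omega, hc⟩
      · rintro (⟨ha, hb, hc⟩ | ⟨ha, hb, hc⟩) <;> exact ⟨ha, by omega, by omega⟩
    have hdisj : ∀ u : Finset ℕ,
        Disjoint (u ∩ Finset.Icc 1 j) (u ∩ Finset.Ioc j j') := by
      intro u
      rw [Finset.disjoint_left]
      intro x hx1 hx2
      simp only [Finset.mem_inter, Finset.mem_Icc, Finset.mem_Ioc] at hx1 hx2
      omega
    have hmid : s ∩ Finset.Ioc j j' = t ∩ Finset.Ioc j j' := by
      ext x
      simp only [Finset.mem_inter, Finset.mem_Ioc]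
      constructor
      · rintro ⟨ha, hb, hc⟩
        exact ⟨(hmem x (by simp only [Finset.mem_Ioc]; omega)).mp ha, hb, hc⟩
      · rintro ⟨ha, hb, hc⟩
        exact ⟨(hmem x (by simp only [Finset.mem_Ioc]; omega)).mpr ha, hb, hc⟩
    rw [hsplit s, hsplit t, Finset.card_union_of_disjoint (hdisj s),
      Finset.card_union_of_disjoint (hdisj t), h1, hmid]
  · ext x
    simp only [Finset.mem_inter, Finset.mem_Ioc]
    constructor
    · rintro ⟨ha, hb, hc⟩
      exact ⟨(hmem x (by simp only [Finset.mem_Ioc]; omega)).mp ha, hb, hc⟩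
    · rintro ⟨ha, hb, hc⟩
      exact ⟨(hmem x (by simp only [Finset.mem_Ioc]; omega)).mpr ha, hb, hc⟩

private lemma rsb_core (n : ℕ) (hn : 1 ≤ n) (ρ : ℝ) (hρ0 : 0 < ρ) (hρ1 : ρ ≤ 1)
    (Jh : Finset ℕ → ℕ)
    (hJ1 : ∀ s ∈ (Finset.Icc 1 n).powerset, 1 ≤ Jh s ∧ Jh s ≤ n)
    (hJ2 : ∀ s ∈ (Finset.Icc 1 n).powerset, ∀ t ∈ (Finset.Icc 1 n).powerset, ∀ j : ℕ,
        Jh s = j →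
        (s ∩ Finset.Icc 1 j).card = (t ∩ Finset.Icc 1 j).card →
        s ∩ Finset.Ioc j n = t ∩ Finset.Ioc j n → Jh t = j) :
    ∑ s ∈ (Finset.Icc 1 n).powerset, (ρ ^ s.card * (1 - ρ) ^ (n - s.card)) *
      ((1 + (Jh s : ℝ)) / (1 + ((s ∩ Finset.Icc 1 (Jh s)).card : ℝ))) ≤ ρ⁻¹ := by
  classical
  set P := (Finset.Icc 1 n).powerset with hP
  set w : Finset ℕ → ℝ := fun s => ρ ^ s.card * (1 - ρ) ^ (n - s.card) with hw
  set T : ℕ → ℝ := fun j => ∑ s ∈ P,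
    (if j ≤ Jh s then w s * ((1 + (j:ℝ)) / (1 + ((s ∩ Finset.Icc 1 j).card : ℝ))) else 0) with hT
  set U : ℕ → ℝ := fun j => ∑ s ∈ P,
    (if j + 1 ≤ Jh s then w s * ((1 + (j:ℝ)) / (1 + ((s ∩ Finset.Icc 1 j).card : ℝ))) else 0)
    with hU
  have hsw : ∑ s ∈ P, w s = 1 := by
    have h := rsb_sum_w ρ (Finset.Icc 1 n)
    rwa [Nat.card_Icc, Nat.add_sub_cancel] at h
  -- step 1: rewrite target as telescoping double sum
  have e1 : ∑ s ∈ P, w s * ((1 + (Jh s : ℝ)) / (1 + ((s ∩ Finset.Icc 1 (Jh s)).card : ℝ)))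
      = ∑ j ∈ Finset.Icc 1 n, (T j - U j) := by
    have e2 : ∀ s ∈ P, w s * ((1 + (Jh s : ℝ)) / (1 + ((s ∩ Finset.Icc 1 (Jh s)).card : ℝ)))
        = ∑ j ∈ Finset.Icc 1 n,
          ((if j ≤ Jh s then w s * ((1 + (j:ℝ)) / (1 + ((s ∩ Finset.Icc 1 j).card : ℝ))) else 0)
           - (if j + 1 ≤ Jh s then
               w s * ((1 + (j:ℝ)) / (1 + ((s ∩ Finset.Icc 1 j).card : ℝ))) else 0)) := by
      intro s hs
      have hmemJ : Jh s ∈ Finset.Icc 1 n := Finset.mem_Icc.mpr ⟨(hJ1 s hs).1, (hJ1 s hs).2⟩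
      have hpt : ∀ j ∈ Finset.Icc 1 n,
          ((if j ≤ Jh s then w s * ((1 + (j:ℝ)) / (1 + ((s ∩ Finset.Icc 1 j).card : ℝ))) else 0)
           - (if j + 1 ≤ Jh s then
               w s * ((1 + (j:ℝ)) / (1 + ((s ∩ Finset.Icc 1 j).card : ℝ))) else 0))
          = (if Jh s = j then
              w s * ((1 + (j:ℝ)) / (1 + ((s ∩ Finset.Icc 1 j).card : ℝ))) else 0) := by
        intro j hj
        by_cases hc1 : j ≤ Jh s
        · by_cases hc2 : j + 1 ≤ Jh s
          · rw [if_pos hc1, if_pos hc2, if_neg (by omega)]; ring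
          · rw [if_pos hc1, if_neg hc2, if_pos (by omega)]; ring
        · rw [if_neg hc1, if_neg (by omega), if_neg (by omega)]; ring
      rw [Finset.sum_congr rfl hpt, Finset.sum_ite_eq, if_pos hmemJ]
    rw [Finset.sum_congr rfl e2, Finset.sum_comm]
    refine Finset.sum_congr rfl fun j hj => ?_
    rw [Finset.sum_sub_distrib]
  -- splitting and reindexing
  have hsplitT : ∑ j ∈ Finset.Icc 1 n, T j = T 1 + ∑ j ∈ Finset.Icc 2 n, T j := by
    have h : Finset.Icc 1 n = insert 1 (Finset.Icc 2 n) := by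
      ext x; simp only [Finset.mem_Icc, Finset.mem_insert]; omega
    rw [h, Finset.sum_insert (by simp)]
  have hUn : U n = 0 := by
    rw [hU]
    refine Finset.sum_eq_zero fun s hs => ?_
    rw [if_neg]
    have := (hJ1 s hs).2; omega
  have hsplitU : ∑ j ∈ Finset.Icc 1 n, U j = ∑ j ∈ Finset.Icc 1 (n-1), U j := by
    have h : Finset.Icc 1 n = insert n (Finset.Icc 1 (n-1)) := by
      ext x; simp only [Finset.mem_Icc, Finset.mem_insert]; omega
    rw [h, Finset.sum_insert (by simp only [Finset.mem_Icc]; omega), hUn, zero_add]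
  have hreidxT : ∑ j ∈ Finset.Icc 2 n, T j = ∑ j ∈ Finset.Icc 1 (n-1), T (j+1) := by
    refine Finset.sum_nbij' (fun j => j - 1) (fun j => j + 1) ?_ ?_ ?_ ?_ ?_
    · intro a ha; simp only [Finset.mem_Icc] at *; omega
    · intro a ha; simp only [Finset.mem_Icc] at *; omega
    · intro a ha; simp only [Finset.mem_Icc] at ha; omega
    · intro a ha; simp only [Finset.mem_Icc] at ha; omega
    · intro a ha; simp only [Finset.mem_Icc] at ha
      congr 1; omega
  -- key comparison
  have hkey : ∀ j ∈ Finset.Icc 1 (n-1), T (j+1) - (1-ρ)^(j+1) ≤ U j := by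
    intro j hj
    rw [Finset.mem_Icc] at hj
    have hj1 : 1 ≤ j := hj.1
    have hjn : j + 1 ≤ n := by omega
    have hA : ∀ s ∈ P, ∀ t ∈ P,
        (s ∩ Finset.Icc 1 (j+1)).card = (t ∩ Finset.Icc 1 (j+1)).card →
        s ∩ Finset.Ioc (j+1) n = t ∩ Finset.Ioc (j+1) n →
        ((fun s => j+1 ≤ Jh s) s ↔ (fun s => j+1 ≤ Jh s) t) := by
      intro s hs t ht h1 h2
      simp only
      constructor
      · intro hles
        obtain ⟨hc1, hc2⟩ := rsb_mono s t (j+1) (Jh s) n hles (hJ1 s hs).2 h1 h2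
        have := hJ2 s hs t ht (Jh s) rfl hc1 hc2
        omega
      · intro hlet
        obtain ⟨hc1, hc2⟩ := rsb_mono t s (j+1) (Jh t) n hlet (hJ1 t ht).2 h1.symm h2.symm
        have := hJ2 t ht s hs (Jh t) rfl hc1 hc2
        omega
    have hks := rsb_keystep ρ (le_of_lt hρ0) hρ1 n j hj1 hjn (fun s => j+1 ≤ Jh s) hA
    have hTj : T (j+1) = ∑ s ∈ P, (if j+1 ≤ Jh s then
        w s * ((2 + (j:ℝ)) / (1 + ((s ∩ Finset.Icc 1 (j+1)).card : ℝ))) else 0) := by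
      rw [hT]
      refine Finset.sum_congr rfl fun s hs => ?_
      by_cases h : j + 1 ≤ Jh s
      · rw [if_pos h, if_pos h]
        have : (1 + ((j+1 : ℕ) : ℝ)) = 2 + (j:ℝ) := by push_cast; ring
        rw [this]
      · rw [if_neg h, if_neg h]
    rw [hTj, hU]
    exact hks
  -- T 1 = 2 - ρ
  have hT1 : T 1 = 2 - ρ := by
    have hz : ∑ s ∈ P, (if s ∩ Finset.Icc 1 1 = ∅ then w s else 0) = (1 - ρ)^1 :=
      rsb_zero_sum ρ n 1 hn
    have hpt : ∀ s ∈ P,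
        (if 1 ≤ Jh s then w s * ((1 + ((1:ℕ):ℝ)) / (1 + ((s ∩ Finset.Icc 1 1).card : ℝ))) else 0)
        = 2 * w s - w s + (if s ∩ Finset.Icc 1 1 = ∅ then w s else 0) := by
      intro s hs
      rw [if_pos (hJ1 s hs).1]
      by_cases h1s : (1:ℕ) ∈ s
      · have hint : s ∩ Finset.Icc 1 1 = {1} := by
          ext x
          simp only [Finset.mem_inter, Finset.mem_Icc, Finset.mem_singleton]
          constructor
          · rintro ⟨ha, hb, hc⟩; omega
          · rintro rfl; exact ⟨h1s, le_refl _, le_refl _⟩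
        rw [hint, if_neg (by simp)]
        norm_num
        ring
      · have hint : s ∩ Finset.Icc 1 1 = ∅ := by
          ext x
          simp only [Finset.mem_inter, Finset.mem_Icc, Finset.notMem_empty, iff_false,
            not_and]
          intro hx h1 h2
          have : x = 1 := by omega
          subst this; exact h1s hx
        rw [hint, if_pos rfl]
        norm_num
        ring
    rw [hT]
    simp only
    rw [Finset.sum_congr rfl hpt]
    rw [Finset.sum_add_distrib, Finset.sum_sub_distrib, ← Finset.mul_sum, hsw, hz]
    ring
  -- geometric bound
  have hgeo : ∑ j ∈ Finset.Icc 1 (n-1), (1-ρ)^(j+1) ≤ (1-ρ)^2 * ρ⁻¹ := by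
    set q := 1 - ρ with hq
    have hq0 : 0 ≤ q := by rw [hq]; linarith
    have hq1 : q < 1 := by rw [hq]; linarith
    have hre : ∑ j ∈ Finset.Icc 1 (n-1), q^(j+1)
        = ∑ i ∈ Finset.range (n-1), q^(i+2) := by
      refine Finset.sum_nbij' (fun j => j - 1) (fun i => i + 1) ?_ ?_ ?_ ?_ ?_
      · intro a ha; simp only [Finset.mem_Icc, Finset.mem_range] at *; omega
      · intro a ha; simp only [Finset.mem_Icc, Finset.mem_range] at *; omega
      · intro a ha; simp only [Finset.mem_Icc] at ha; omega
      · intro a ha; simp only [Finset.mem_range] at ha; omega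
      · intro a ha; simp only [Finset.mem_Icc] at ha
        congr 1; omega
    have hgs : ∑ i ∈ Finset.range (n-1), q^i ≤ ρ⁻¹ := by
      have hmul := geom_sum_mul q (n-1)
      -- (∑ i in range (n-1), q^i) * (q - 1) = q^(n-1) - 1
      have hle : (∑ i ∈ Finset.range (n-1), q^i) * ρ ≤ 1 := by
        have : (∑ i ∈ Finset.range (n-1), q^i) * ρ = 1 - q^(n-1) := by
          have hρq : ρ = -(q - 1) := by rw [hq]; ring
          rw [hρq]
          nlinarith [hmul]
        rw [this]
        have : 0 ≤ q^(n-1) := pow_nonneg hq0 _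
        linarith
      rw [← one_div, le_div_iff₀ hρ0]
      exact hle
    calc ∑ j ∈ Finset.Icc 1 (n-1), q^(j+1)
        = q^2 * ∑ i ∈ Finset.range (n-1), q^i := by
          rw [hre, Finset.mul_sum]
          refine Finset.sum_congr rfl fun i hi => ?_
          ring
      _ ≤ q^2 * ρ⁻¹ := by
          apply mul_le_mul_of_nonneg_left hgs (by positivity)
  -- assemble
  rw [e1, Finset.sum_sub_distrib, hsplitT, hsplitU, hreidxT]
  have hsum_cmp : ∑ j ∈ Finset.Icc 1 (n-1), T (j+1) - ∑ j ∈ Finset.Icc 1 (n-1), U j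
      ≤ ∑ j ∈ Finset.Icc 1 (n-1), (1-ρ)^(j+1) := by
    rw [← Finset.sum_sub_distrib]
    refine Finset.sum_le_sum fun j hj => ?_
    linarith [hkey j hj]
  have hid : (2 - ρ) + (1-ρ)^2 * ρ⁻¹ = ρ⁻¹ := by
    field_simp
    ring
  linarith
open MeasureTheory ProbabilityTheory

private lemma rsb_S_eq {Ω : Type*} (B : ℕ → Ω → ℝ)
    (h01 : ∀ i ω, B i ω = 0 ∨ B i ω = 1) (n : ℕ) (c : Ω → Finset ℕ)
    (hc : ∀ ω, c ω = (Finset.Icc 1 n).filter (fun i => B i ω = 1))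
    (j : ℕ) (hjn : j ≤ n) (ω : Ω) :
    ∑ i ∈ Finset.Icc 1 j, B i ω = ((c ω ∩ Finset.Icc 1 j).card : ℝ) := by
  have h1 : c ω ∩ Finset.Icc 1 j = (Finset.Icc 1 j).filter (fun i => B i ω = 1) := by
    rw [hc]
    ext x
    simp only [Finset.mem_inter, Finset.mem_filter, Finset.mem_Icc]
    constructor
    · rintro ⟨⟨h2, h3⟩, h4, h5⟩; exact ⟨⟨h4, h5⟩, h3⟩
    · rintro ⟨⟨h4, h5⟩, h3⟩; exact ⟨⟨⟨h4, by omega⟩, h3⟩, h4, h5⟩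
  rw [h1, ← Finset.sum_boole]
  refine Finset.sum_congr rfl fun i hi => ?_
  rcases h01 i ω with h | h
  · rw [if_neg (by rw [h]; norm_num)]
    exact h
  · rw [if_pos h]
    exact h

private lemma rsb_F_le {Ω : Type*} [m0 : MeasurableSpace Ω] (B : ℕ → Ω → ℝ)
    (h01 : ∀ i ω, B i ω = 0 ∨ B i ω = 1) (n : ℕ) (c : Ω → Finset ℕ)
    (hc : ∀ ω, c ω = (Finset.Icc 1 n).filter (fun i => B i ω = 1))
    (j : ℕ) (hjn : j ≤ n)
    (S : ℕ → Ω → ℝ) (hS : ∀ k ω, S k ω = ∑ i ∈ Finset.Icc 1 k, B i ω) :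
    (MeasurableSpace.comap (S j) inferInstance ⊔
      ⨆ i ∈ Finset.Ioc j n, MeasurableSpace.comap (B i) inferInstance) ≤
    MeasurableSpace.comap
      (fun ω => ((c ω ∩ Finset.Icc 1 j).card, c ω ∩ Finset.Ioc j n))
      (⊤ : MeasurableSpace (ℕ × Finset ℕ)) := by
  apply sup_le
  · have hfun : S j = (fun p : ℕ × Finset ℕ => (p.1 : ℝ)) ∘
        (fun ω => ((c ω ∩ Finset.Icc 1 j).card, c ω ∩ Finset.Ioc j n)) := by
      funext ω
      simp only [Function.comp_apply]
      rw [hS j ω, rsb_S_eq B h01 n c hc j hjn ω]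
    rw [hfun, ← MeasurableSpace.comap_comp]
    exact MeasurableSpace.comap_mono le_top
  · refine iSup₂_le fun i hi => ?_
    rw [Finset.mem_Ioc] at hi
    have hfun : B i = (fun p : ℕ × Finset ℕ => if i ∈ p.2 then (1:ℝ) else 0) ∘
        (fun ω => ((c ω ∩ Finset.Icc 1 j).card, c ω ∩ Finset.Ioc j n)) := by
      funext ω
      simp only [Function.comp_apply]
      have hmem : i ∈ c ω ∩ Finset.Ioc j n ↔ B i ω = 1 := by
        rw [hc]
        simp only [Finset.mem_inter, Finset.mem_filter, Finset.mem_Icc, Finset.mem_Ioc]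
        constructor
        · rintro ⟨⟨-, h⟩, -⟩; exact h
        · intro h; exact ⟨⟨⟨by omega, hi.2⟩, h⟩, hi.1, hi.2⟩
      rcases h01 i ω with h | h
      · rw [if_neg (fun hh => by rw [hmem.mp hh] at h; norm_num at h)]
        exact h
      · rw [if_pos (hmem.mpr h)]
        exact h
    rw [hfun, ← MeasurableSpace.comap_comp]
    exact MeasurableSpace.comap_mono le_top

/-- Lemma 1 (i.i.d. case): for i.i.d. Bernoulli(ρ) variables `B 1, ..., B n` with `ρ > 0`
and a stopping time `J` in reverse time with respect to the reverse filtration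
`F j = σ(B 1 + ... + B j, B (j+1), ..., B n)`, one has
`E[(1+J)/(1+B 1+...+B J)] ≤ ρ⁻¹`. -/
theorem reverse_stopping_time_bound_iid
    {Ω : Type*} [MeasurableSpace Ω] (μ : Measure Ω) [IsProbabilityMeasure μ]
    (n : ℕ) (ρ : ℝ) (hρ : 0 < ρ) (B : ℕ → Ω → ℝ)
    (hmeas : ∀ i, Measurable (B i))
    (h01 : ∀ i ω, B i ω = 0 ∨ B i ω = 1)
    (hber : ∀ i, μ {ω | B i ω = 1} = ENNReal.ofReal ρ)
    (hindep : iIndepFun B μ)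
    (S : ℕ → Ω → ℝ) (hS : ∀ j ω, S j ω = ∑ i ∈ Finset.Icc 1 j, B i ω)
    (F : ℕ → MeasurableSpace Ω)
    (hF : ∀ j, F j = MeasurableSpace.comap (S j) inferInstance ⊔
        ⨆ i ∈ Finset.Ioc j n, MeasurableSpace.comap (B i) inferInstance)
    (J : Ω → ℕ) (hJrange : ∀ ω, 1 ≤ J ω ∧ J ω ≤ n)
    (hJstop : ∀ j, MeasurableSet[F j] {ω | J ω = j}) :
    ∫ ω, (1 + (J ω : ℝ)) / (1 + S (J ω) ω) ∂μ ≤ ρ⁻¹ := by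
  classical
  have hprob : μ Set.univ = 1 := measure_univ
  have hnonempty : Nonempty Ω := by
    by_contra h
    rw [not_nonempty_iff] at h
    rw [Set.univ_eq_empty_iff.mpr h, measure_empty] at hprob
    exact zero_ne_one hprob
  obtain ⟨ω₀⟩ := hnonempty
  have hn : 1 ≤ n := le_trans (hJrange ω₀).1 (hJrange ω₀).2
  have hρ1 : ρ ≤ 1 := by
    have h2 : μ {ω | B 1 ω = 1} ≤ 1 := prob_le_one
    rw [hber 1] at h2
    exact ENNReal.ofReal_le_one.mp h2
  -- measurability and measures of preimages
  have hmeas1 : ∀ i, MeasurableSet (B i ⁻¹' ({1} : Set ℝ)) :=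
    fun i => hmeas i (measurableSet_singleton 1)
  have hμ1 : ∀ i, μ (B i ⁻¹' ({1} : Set ℝ)) = ENNReal.ofReal ρ := fun i => hber i
  have hcompl : ∀ i, B i ⁻¹' ({0} : Set ℝ) = (B i ⁻¹' ({1} : Set ℝ))ᶜ := by
    intro i
    ext ω
    simp only [Set.mem_preimage, Set.mem_singleton_iff, Set.mem_compl_iff]
    rcases h01 i ω with h | h <;> rw [h] <;> norm_num
  have hμ0 : ∀ i, μ (B i ⁻¹' ({0} : Set ℝ)) = ENNReal.ofReal (1 - ρ) := by
    intro i
    rw [hcompl i, prob_compl_eq_one_sub (hmeas1 i), hμ1 i, ← ENNReal.ofReal_one,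
      ← ENNReal.ofReal_sub _ (le_of_lt hρ)]
  -- the classifier
  obtain ⟨c, hc⟩ : ∃ c : Ω → Finset ℕ,
      ∀ ω, c ω = (Finset.Icc 1 n).filter (fun i => B i ω = 1) := ⟨_, fun _ => rfl⟩
  have hcP : ∀ ω, c ω ∈ (Finset.Icc 1 n).powerset := fun ω => by
    rw [hc]; exact Finset.mem_powerset.mpr (Finset.filter_subset _ _)
  have hatom : ∀ s ∈ (Finset.Icc 1 n).powerset,
      c ⁻¹' {s} = ⋂ i ∈ (Finset.Icc 1 n : Finset ℕ),
        B i ⁻¹' {if i ∈ s then (1:ℝ) else 0} := by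
    intro s hs
    have hssub := Finset.mem_powerset.mp hs
    ext ω
    simp only [Set.mem_preimage, Set.mem_singleton_iff, Set.mem_iInter]
    constructor
    · rintro rfl
      intro i hi
      by_cases him : i ∈ c ω
      · rw [if_pos him]
        have := Finset.mem_filter.mp ((hc ω) ▸ him)
        exact this.2
      · rw [if_neg him]
        rcases h01 i ω with h | h
        · exact h
        · exact absurd ((hc ω).symm ▸ Finset.mem_filter.mpr ⟨hi, h⟩) him
    · intro h
      ext i
      constructor
      · intro hicω
        have hi : i ∈ Finset.Icc 1 n := by
          rw [hc] at hicω
          exact (Finset.mem_filter.mp hicω).1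
        have hBi := (Finset.mem_filter.mp ((hc ω) ▸ hicω)).2
        have := h i hi
        by_contra his
        rw [if_neg his] at this
        rw [this] at hBi
        norm_num at hBi
      · intro his
        have hi : i ∈ Finset.Icc 1 n := hssub his
        have := h i hi
        rw [if_pos his] at this
        rw [hc]
        exact Finset.mem_filter.mpr ⟨hi, this⟩
  have hfib_meas : ∀ s ∈ (Finset.Icc 1 n).powerset, MeasurableSet (c ⁻¹' {s}) := by
    intro s hs
    rw [hatom s hs]
    exact Finset.measurableSet_biInter _ fun i _ => hmeas i (measurableSet_singleton _)
  have hfib_measure : ∀ s ∈ (Finset.Icc 1 n).powerset,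
      μ (c ⁻¹' {s}) = ENNReal.ofReal ρ ^ s.card * ENNReal.ofReal (1 - ρ) ^ (n - s.card) := by
    intro s hs
    have hssub := Finset.mem_powerset.mp hs
    rw [hatom s hs]
    rw [hindep.measure_inter_preimage_eq_mul (Finset.Icc 1 n)
      (sets := fun i => {if i ∈ s then (1:ℝ) else 0}) (fun i _ => measurableSet_singleton _)]
    have hterm : ∀ i ∈ Finset.Icc 1 n, μ (B i ⁻¹' {if i ∈ s then (1:ℝ) else 0})
        = if i ∈ s then ENNReal.ofReal ρ else ENNReal.ofReal (1 - ρ) := by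
      intro i _
      by_cases him : i ∈ s
      · rw [if_pos him, if_pos him, hμ1]
      · rw [if_neg him, if_neg him, hμ0]
    rw [Finset.prod_congr rfl hterm, Finset.prod_ite, Finset.prod_const, Finset.prod_const,
      Finset.filter_mem_eq_inter, Finset.inter_eq_right.mpr hssub]
    have hfilt : (Finset.Icc 1 n).filter (fun i => i ∉ s) = Finset.Icc 1 n \ s := by
      ext x
      simp [Finset.mem_filter, Finset.mem_sdiff]
    rw [hfilt, Finset.card_sdiff_of_subset hssub, Nat.card_Icc, Nat.add_sub_cancel]
  have hwval : ∀ s ∈ (Finset.Icc 1 n).powerset,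
      (μ (c ⁻¹' {s})).toReal = ρ ^ s.card * (1 - ρ) ^ (n - s.card) := by
    intro s hs
    rw [hfib_measure s hs, ENNReal.toReal_mul, ENNReal.toReal_pow, ENNReal.toReal_pow,
      ENNReal.toReal_ofReal (le_of_lt hρ), ENNReal.toReal_ofReal (by linarith)]
  -- master integral formula
  have hmaster : ∀ G : Finset ℕ → ℝ, ∫ ω, G (c ω) ∂μ
      = ∑ s ∈ (Finset.Icc 1 n).powerset, (ρ ^ s.card * (1 - ρ) ^ (n - s.card)) * G s := by
    intro G
    have hpt : ∀ ω, G (c ω) = ∑ s ∈ (Finset.Icc 1 n).powerset,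
        Set.indicator (c ⁻¹' {s}) (fun _ => G s) ω := by
      intro ω
      rw [Finset.sum_eq_single (c ω)]
      · rw [Set.indicator_of_mem (show ω ∈ c ⁻¹' {c ω} from rfl)]
      · intro t _ htne
        apply Set.indicator_of_notMem
        simp only [Set.mem_preimage, Set.mem_singleton_iff]
        exact fun h => htne h.symm
      · intro h
        exact absurd (hcP ω) h
    calc ∫ ω, G (c ω) ∂μ
        = ∫ ω, ∑ s ∈ (Finset.Icc 1 n).powerset,
            Set.indicator (c ⁻¹' {s}) (fun _ => G s) ω ∂μ :=
          integral_congr_ae (Filter.Eventually.of_forall hpt)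
      _ = ∑ s ∈ (Finset.Icc 1 n).powerset,
            ∫ ω, Set.indicator (c ⁻¹' {s}) (fun _ => G s) ω ∂μ :=
          integral_finset_sum _ fun s hs =>
            (integrable_const (G s)).indicator (hfib_meas s hs)
      _ = ∑ s ∈ (Finset.Icc 1 n).powerset, (ρ ^ s.card * (1 - ρ) ^ (n - s.card)) * G s := by
          refine Finset.sum_congr rfl fun s hs => ?_
          rw [integral_indicator_const (G s) (hfib_meas s hs), measureReal_def, hwval s hs, smul_eq_mul]
  rcases eq_or_lt_of_le hρ1 with heq | hlt
  · -- ρ = 1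
    subst heq
    have hae1 : ∀ i ∈ Finset.Icc 1 n, ∀ᵐ ω ∂μ, B i ω = 1 := by
      intro i _
      rw [ae_iff]
      have : {ω | ¬B i ω = 1} = B i ⁻¹' ({0} : Set ℝ) := by
        rw [hcompl i]
        rfl
      rw [this, hμ0 i]
      simp
    have hae : ∀ᵐ ω ∂μ, ∀ i ∈ Finset.Icc 1 n, B i ω = 1 :=
      (MeasureTheory.ae_ball_iff (Finset.Icc 1 n).countable_toSet).mpr hae1
    have hae2 : ∀ᵐ ω ∂μ, (1 + (J ω : ℝ)) / (1 + S (J ω) ω) = 1 := by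
      filter_upwards [hae] with ω hω
      have hSval : S (J ω) ω = (J ω : ℝ) := by
        rw [hS]
        have hall : ∀ i ∈ Finset.Icc 1 (J ω), B i ω = 1 := by
          intro i hi
          rw [Finset.mem_Icc] at hi
          exact hω i (Finset.mem_Icc.mpr ⟨hi.1, le_trans hi.2 (hJrange ω).2⟩)
        rw [Finset.sum_congr rfl hall, Finset.sum_const, Nat.card_Icc, Nat.add_sub_cancel,
          nsmul_eq_mul, mul_one]
      rw [hSval]
      have hpos : (0:ℝ) < 1 + (J ω : ℝ) := by positivity
      field_simp
    rw [integral_congr_ae hae2, integral_const, measureReal_def, hprob, ENNReal.toReal_one, smul_eq_mul,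
      mul_one, inv_one]
  · -- ρ < 1
    have hfib_ne : ∀ s ∈ (Finset.Icc 1 n).powerset, (c ⁻¹' {s}).Nonempty := by
      intro s hs
      apply nonempty_of_measure_ne_zero (μ := μ)
      rw [hfib_measure s hs]
      have h1 : ENNReal.ofReal ρ ≠ 0 := by
        simp only [ne_eq, ENNReal.ofReal_eq_zero, not_le]
        exact hρ
      have h2 : ENNReal.ofReal (1 - ρ) ≠ 0 := by
        simp only [ne_eq, ENNReal.ofReal_eq_zero, not_le]
        linarith
      exact mul_ne_zero (pow_ne_zero _ h1) (pow_ne_zero _ h2)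
    have hJconst : ∀ ω ω', c ω = c ω' → J ω = J ω' := by
      intro ω ω' hcc
      have hjn : J ω ≤ n := (hJrange ω).2
      have hle := rsb_F_le B h01 n c hc (J ω) hjn S hS
      have hms := hle _ ((hF (J ω)) ▸ hJstop (J ω))
      obtain ⟨E, -, hE⟩ := hms
      have hωin : ((c ω ∩ Finset.Icc 1 (J ω)).card, c ω ∩ Finset.Ioc (J ω) n) ∈ E := by
        have : ω ∈ (fun ω' => ((c ω' ∩ Finset.Icc 1 (J ω)).card,
            c ω' ∩ Finset.Ioc (J ω) n)) ⁻¹' E := by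
          rw [hE]
          exact (rfl : J ω = J ω)
        exact this
      have hω'in : ω' ∈ (fun ω'' => ((c ω'' ∩ Finset.Icc 1 (J ω)).card,
          c ω'' ∩ Finset.Ioc (J ω) n)) ⁻¹' E := by
        simp only [Set.mem_preimage, ← hcc]
        exact hωin
      rw [hE] at hω'in
      exact hω'in.symm ▸ rfl
    obtain ⟨Jh, hJh⟩ : ∃ Jh : Finset ℕ → ℕ,
        ∀ s, Jh s = if h : (c ⁻¹' {s}).Nonempty then J h.choose else 1 := ⟨_, fun _ => rfl⟩
    have hJh_eq : ∀ ω, J ω = Jh (c ω) := by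
      intro ω
      have hne : (c ⁻¹' {c ω}).Nonempty := ⟨ω, rfl⟩
      rw [hJh, dif_pos hne]
      have hspec := hne.choose_spec
      have : c hne.choose = c ω := hspec
      exact hJconst ω _ this.symm
    have hJ1core : ∀ s ∈ (Finset.Icc 1 n).powerset, 1 ≤ Jh s ∧ Jh s ≤ n := by
      intro s hs
      rw [hJh, dif_pos (hfib_ne s hs)]
      exact hJrange _
    have hJ2core : ∀ s ∈ (Finset.Icc 1 n).powerset, ∀ t ∈ (Finset.Icc 1 n).powerset, ∀ j : ℕ,
        Jh s = j →
        (s ∩ Finset.Icc 1 j).card = (t ∩ Finset.Icc 1 j).card →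
        s ∩ Finset.Ioc j n = t ∩ Finset.Ioc j n → Jh t = j := by
      intro s hs t ht j hJs h1 h2
      obtain ⟨ωs, hωs⟩ := hfib_ne s hs
      obtain ⟨ωt, hωt⟩ := hfib_ne t ht
      have hcs : c ωs = s := hωs
      have hct : c ωt = t := hωt
      have hJωs : J ωs = j := by rw [hJh_eq ωs, hcs, hJs]
      have hjn : j ≤ n := by
        rw [← hJs]
        exact (hJ1core s hs).2
      have hle := rsb_F_le B h01 n c hc j hjn S hS
      have hms := hle _ ((hF j) ▸ hJstop j)
      obtain ⟨E, -, hE⟩ := hms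
      have hωsin : ((c ωs ∩ Finset.Icc 1 j).card, c ωs ∩ Finset.Ioc j n) ∈ E := by
        have : ωs ∈ (fun ω => ((c ω ∩ Finset.Icc 1 j).card, c ω ∩ Finset.Ioc j n)) ⁻¹' E := by
          rw [hE]
          exact hJωs
        exact this
      have hval : ((c ωt ∩ Finset.Icc 1 j).card, c ωt ∩ Finset.Ioc j n)
          = ((c ωs ∩ Finset.Icc 1 j).card, c ωs ∩ Finset.Ioc j n) := by
        rw [hcs, hct]
        exact Prod.ext h1.symm h2.symm
      have hωtin : ωt ∈ (fun ω => ((c ω ∩ Finset.Icc 1 j).card, c ω ∩ Finset.Ioc j n)) ⁻¹' E := by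
        simp only [Set.mem_preimage, hval]
        exact hωsin
      rw [hE] at hωtin
      have hJt : J ωt = j := hωtin
      rw [hJh_eq ωt, hct] at hJt
      exact hJt
    have hint_eq : ∀ ω, (1 + (J ω : ℝ)) / (1 + S (J ω) ω)
        = (1 + (Jh (c ω) : ℝ)) /
          (1 + (((c ω) ∩ Finset.Icc 1 (Jh (c ω))).card : ℝ)) := by
      intro ω
      rw [← hJh_eq ω, hS, rsb_S_eq B h01 n c hc (J ω) (hJrange ω).2 ω]
    calc ∫ ω, (1 + (J ω : ℝ)) / (1 + S (J ω) ω) ∂μ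
        = ∫ ω, (1 + (Jh (c ω) : ℝ)) /
            (1 + (((c ω) ∩ Finset.Icc 1 (Jh (c ω))).card : ℝ)) ∂μ :=
          integral_congr_ae (Filter.Eventually.of_forall hint_eq)
      _ = ∑ s ∈ (Finset.Icc 1 n).powerset, (ρ ^ s.card * (1 - ρ) ^ (n - s.card)) *
            ((1 + (Jh s : ℝ)) / (1 + ((s ∩ Finset.Icc 1 (Jh s)).card : ℝ))) :=
          hmaster (fun s => (1 + (Jh s : ℝ)) / (1 + ((s ∩ Finset.Icc 1 (Jh s)).card : ℝ)))
      _ ≤ ρ⁻¹ := rsb_core n hn ρ hρ hρ1 Jh hJ1core hJ2core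
end

section
/- Let B_1,...,B_n be independent Bernoulli random variables with B_i ~ Bernoulli(ρ_i) and min_i ρ_i ≥ ρ > 0. Let J be a stopping time in reverse time with respect to F_j = σ(B_1+...+B_j, B_{j+1},...,B_n). Then E[(1+J)/(1+B_1+...+B_J)] ≤ ρ^{-1}. -/
open MeasureTheory ProbabilityTheory
open Finset

lemma binom_bound (ρ : ℝ) (h0 : 0 < ρ) (h1 : ρ ≤ 1) (a : Finset ℕ) :
    ∑ q ∈ a.powerset, ρ^q.card * (1-ρ)^(a.card - q.card) * ((1 + (a.card:ℝ))/(1 + (q.card:ℝ)))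
      ≤ ρ⁻¹ := by
  set N := a.card with hN
  have key : ρ * ∑ q ∈ a.powerset, ρ^q.card * (1-ρ)^(N - q.card) * ((1 + (N:ℝ))/(1 + (q.card:ℝ))) ≤ 1 := by
    rw [Finset.mul_sum]
    rw [Finset.sum_powerset]
    have hterm : ∀ k ∈ range (N+1),
        (∑ q ∈ a.powersetCard k, ρ * (ρ^q.card * (1-ρ)^(N - q.card) * ((1 + (N:ℝ))/(1 + (q.card:ℝ)))))
        = ρ^(k+1) * (1-ρ)^(N+1-(k+1)) * ((N+1).choose (k+1)) := by
      intro k hk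
      have h1' : ∀ q ∈ a.powersetCard k,
          ρ * (ρ^q.card * (1-ρ)^(N - q.card) * ((1+(N:ℝ))/(1+(q.card:ℝ))))
          = ρ * (ρ^k * (1-ρ)^(N-k) * ((1+(N:ℝ))/(1+(k:ℝ)))) := by
        intro q hq; rw [(mem_powersetCard.mp hq).2]
      rw [Finset.sum_congr rfl h1', Finset.sum_const, card_powersetCard, nsmul_eq_mul]
      have hNk : N+1-(k+1) = N-k := by omega
      rw [hNk]
      have hk1 : (0:ℝ) < 1 + (k:ℝ) := by positivity
      have hch : ((N:ℝ) + 1) * (N.choose k) = ((N+1).choose (k+1)) * ((k:ℝ)+1) := by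
        exact_mod_cast congrArg (Nat.cast (R := ℝ)) (Nat.add_one_mul_choose_eq N k)
      have hkey : ((N.choose k):ℝ) * ((1+(N:ℝ))/(1+(k:ℝ))) = ((N+1).choose (k+1):ℝ) := by
        rw [mul_div_assoc'] at *
        rw [div_eq_iff (ne_of_gt hk1)]
        linarith [hch]
      calc ((N.choose k):ℝ) * (ρ * (ρ^k * (1-ρ)^(N-k) * ((1+(N:ℝ))/(1+(k:ℝ)))))
          = ρ^(k+1) * (1-ρ)^(N-k) * (((N.choose k):ℝ) * ((1+(N:ℝ))/(1+(k:ℝ)))) := by ring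
        _ = ρ^(k+1) * (1-ρ)^(N-k) * ((N+1).choose (k+1)) := by rw [hkey]
    rw [Finset.sum_congr rfl hterm]
    have hbin : ∑ t ∈ range (N+2), ρ^t * (1-ρ)^(N+1-t) * ((N+1).choose t) = 1 := by
      rw [← add_pow]
      norm_num
    have hshift := Finset.sum_range_succ' (fun t => ρ^t * (1-ρ)^(N+1-t) * (((N+1).choose t):ℝ)) (N+1)
    have h00 : (0:ℝ) ≤ ρ^0 * (1-ρ)^(N+1-0) * (((N+1).choose 0):ℝ) := by
      have : (0:ℝ) ≤ 1 - ρ := by linarith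
      positivity
    linarith [hbin ▸ hshift]
  have h2 : ρ * (∑ q ∈ a.powerset, ρ^q.card * (1-ρ)^(N - q.card) * ((1 + (N:ℝ))/(1 + (q.card:ℝ)))) ≤ ρ * ρ⁻¹ := by
    rw [mul_inv_cancel₀ (ne_of_gt h0)]; exact key
  exact le_of_mul_le_mul_left h2 h0

-- swap preserves membership in a, given both points in a
lemma swap_mem_set {a : Finset ℕ} {i j' : ℕ} (hi : i ∈ a) (hj : j' ∈ a) :
    ∀ y ∈ a, Equiv.swap i j' y ∈ a := by
  intro y hy
  rcases eq_or_ne y i with rfl | h1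
  · rwa [Equiv.swap_apply_left]
  rcases eq_or_ne y j' with rfl | h2
  · rwa [Equiv.swap_apply_right]
  · rwa [Equiv.swap_apply_of_ne_of_ne h1 h2]

lemma swap_mem_Icc {i j' : ℕ} (hi1 : 1 ≤ i) (hij : i ≤ j') :
    ∀ x, Equiv.swap i j' x ∈ Icc 1 j' ↔ x ∈ Icc 1 j' := by
  have key : ∀ y ∈ Icc 1 j', Equiv.swap i j' y ∈ Icc 1 j' :=
    swap_mem_set (by simp [mem_Icc]; omega) (by simp [mem_Icc]; omega)
  intro x
  constructor
  · intro h
    have := key _ h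
    rwa [Equiv.swap_apply_self] at this
  · exact key x

lemma pi_subset {a : Finset ℕ} {i j' : ℕ} (hi : i ∈ a) (hj : j' ∈ a) {q : Finset ℕ}
    (hq : q ⊆ a) : q.map (Equiv.swap i j').toEmbedding ⊆ a := by
  intro x hx
  rw [mem_map_equiv, Equiv.symm_swap] at hx
  have : Equiv.swap i j' (Equiv.swap i j' x) ∈ a := swap_mem_set hi hj _ (hq hx)
  rwa [Equiv.swap_apply_self] at this

lemma pi_pi {i j' : ℕ} (q : Finset ℕ) :
    (q.map (Equiv.swap i j').toEmbedding).map (Equiv.swap i j').toEmbedding = q := by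
  ext x
  simp only [mem_map_equiv, Equiv.symm_swap, Equiv.swap_apply_self]

lemma pi_inter {i j' : ℕ} (hi1 : 1 ≤ i) (hij : i ≤ j') (q : Finset ℕ) :
    (q.map (Equiv.swap i j').toEmbedding) ∩ Icc 1 j'
      = (q ∩ Icc 1 j').map (Equiv.swap i j').toEmbedding := by
  ext x
  simp only [mem_inter, mem_map_equiv, Equiv.symm_swap]
  rw [← swap_mem_Icc hi1 hij x]

lemma pi_sdiff {i j' : ℕ} (hi1 : 1 ≤ i) (hij : i ≤ j') (q : Finset ℕ) :
    (q.map (Equiv.swap i j').toEmbedding) \ Icc 1 j' = q \ Icc 1 j' := by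
  ext x
  simp only [mem_sdiff, mem_map_equiv, Equiv.symm_swap]
  constructor
  · rintro ⟨h1, h2⟩
    have hx : Equiv.swap i j' x = x := by
      apply Equiv.swap_apply_of_ne_of_ne
      · rintro rfl; exact h2 (by simp [mem_Icc]; omega)
      · rintro rfl; exact h2 (by simp [mem_Icc]; omega)
    rw [hx] at h1; exact ⟨h1, h2⟩
  · rintro ⟨h1, h2⟩
    have hx : Equiv.swap i j' x = x := by
      apply Equiv.swap_apply_of_ne_of_ne
      · rintro rfl; exact h2 (by simp [mem_Icc]; omega)
      · rintro rfl; exact h2 (by simp [mem_Icc]; omega)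
    rw [hx]; exact ⟨h1, h2⟩

lemma pi_mem_top {i j' : ℕ} (q : Finset ℕ) :
    j' ∈ q.map (Equiv.swap i j').toEmbedding ↔ i ∈ q := by
  rw [mem_map_equiv, Equiv.symm_swap, Equiv.swap_apply_right]

-- intersect with smaller Icc via erase
lemma inter_Icc_erase (s : Finset ℕ) (j : ℕ) :
    s ∩ Icc 1 j = (s ∩ Icc 1 (j+1)).erase (j+1) := by
  ext x
  simp only [mem_erase, mem_inter, mem_Icc]
  constructor
  · rintro ⟨h1, h2, h3⟩
    exact ⟨by omega, h1, h2, by omega⟩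
  · rintro ⟨h0, h1, h2, h3⟩
    exact ⟨h1, h2, by omega⟩

lemma inter_Icc_succ_of_not_mem {s : Finset ℕ} {j : ℕ} (h : j + 1 ∉ s) :
    s ∩ Icc 1 (j+1) = s ∩ Icc 1 j := by
  ext x
  simp only [mem_inter, mem_Icc]
  constructor
  · rintro ⟨h1, h2, h3⟩
    have : x ≠ j + 1 := by rintro rfl; exact h h1
    exact ⟨h1, h2, by omega⟩
  · rintro ⟨h1, h2, h3⟩
    exact ⟨h1, h2, by omega⟩

namespace RevStop

def bb (n : ℕ) (a q : Finset ℕ) : Finset ℕ := (Icc 1 n \ a) ∪ q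

noncomputable def ww (ρ : ℝ) (a q : Finset ℕ) : ℝ := ρ^q.card * (1-ρ)^(a.card - q.card)

noncomputable def XX (a : Finset ℕ) (j : ℕ) (q : Finset ℕ) : ℝ :=
  (1 + ((a ∩ Icc 1 j).card:ℝ))/(1 + ((q ∩ Icc 1 j).card:ℝ))

noncomputable def VV (n : ℕ) (ρ : ℝ) (a : Finset ℕ) (Jh : Finset ℕ → ℕ) (j : ℕ) : ℝ :=
  ∑ q ∈ a.powerset, ww ρ a q * XX a (max (Jh (bb n a q)) j) q

lemma ww_nonneg {ρ : ℝ} (h0 : 0 < ρ) (h1 : ρ ≤ 1) (a q : Finset ℕ) : 0 ≤ ww ρ a q := by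
  have : (0:ℝ) ≤ 1 - ρ := by linarith
  unfold ww; positivity

lemma XX_pos {a : Finset ℕ} {j : ℕ} {q : Finset ℕ} : 0 < XX a j q := by
  unfold XX; positivity

lemma bb_subset {n : ℕ} {a q : Finset ℕ} (ha : a ⊆ Icc 1 n) (hq : q ⊆ a) :
    bb n a q ⊆ Icc 1 n :=
  union_subset (sdiff_subset) (hq.trans ha)

lemma ww_map {ρ : ℝ} (a : Finset ℕ) (i j' : ℕ) (q : Finset ℕ) :
    ww ρ a (q.map (Equiv.swap i j').toEmbedding) = ww ρ a q := by
  unfold ww; rw [card_map]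

-- cardinality of bb ∩ Icc 1 j
lemma bb_inter_card {n : ℕ} {a q : Finset ℕ} (ha : a ⊆ Icc 1 n) (hq : q ⊆ a)
    {j : ℕ} (hj : j ≤ n) :
    ((bb n a q) ∩ Icc 1 j).card = (j - (a ∩ Icc 1 j).card) + (q ∩ Icc 1 j).card := by
  have h1 : (bb n a q) ∩ Icc 1 j = ((Icc 1 n \ a) ∩ Icc 1 j) ∪ (q ∩ Icc 1 j) := by
    unfold bb; rw [union_inter_distrib_right]
  have h2 : (Icc 1 n \ a) ∩ Icc 1 j = Icc 1 j \ (a ∩ Icc 1 j) := by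
    ext x
    simp only [mem_inter, mem_sdiff, mem_Icc]
    constructor
    · rintro ⟨⟨hx1, hx2⟩, hx3⟩
      exact ⟨hx3, fun h => hx2 h.1⟩
    · rintro ⟨⟨hx1, hx2⟩, hx3⟩
      refine ⟨⟨⟨hx1, by omega⟩, fun h => hx3 ⟨h, hx1, hx2⟩⟩, hx1, hx2⟩
  have hdisj : Disjoint ((Icc 1 n \ a) ∩ Icc 1 j) (q ∩ Icc 1 j) := by
    rw [h2]
    apply disjoint_left.mpr
    intro x hx hx'
    rcases mem_sdiff.mp hx with ⟨hxj, hxna⟩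
    exact hxna (mem_inter.mpr ⟨hq (mem_inter.mp hx').1, hxj⟩)
  rw [h1, card_union_of_disjoint hdisj, h2, card_sdiff_of_subset inter_subset_right, Nat.card_Icc]
  omega

-- swap preserves (q ∩ Icc 1 j').card and bb-sdiff
lemma pi_inter_card {i j' : ℕ} (hi1 : 1 ≤ i) (hij : i ≤ j') (q : Finset ℕ) :
    ((q.map (Equiv.swap i j').toEmbedding) ∩ Icc 1 j').card = (q ∩ Icc 1 j').card := by
  rw [pi_inter hi1 hij, card_map]

lemma bb_swap_sdiff {n : ℕ} {a : Finset ℕ} {i j' : ℕ}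
    (hi1 : 1 ≤ i) (hij : i ≤ j') (q : Finset ℕ) :
    (bb n a (q.map (Equiv.swap i j').toEmbedding)) \ Icc 1 j' = (bb n a q) \ Icc 1 j' := by
  unfold bb
  rw [union_sdiff_distrib, union_sdiff_distrib, pi_sdiff hi1 hij]

lemma swap_sum_bound {a : Finset ℕ} {j : ℕ} (hja : j+1 ∈ a) {q : Finset ℕ} (hq : q ⊆ a) :
    ∑ i ∈ a ∩ Icc 1 (j+1), XX a j (q.map (Equiv.swap i (j+1)).toEmbedding)
      ≤ ((a ∩ Icc 1 (j+1)).card : ℝ) * XX a (j+1) q := by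
  classical
  set M := (a ∩ Icc 1 (j+1)).card with hM
  set t := (q ∩ Icc 1 (j+1)).card with ht
  have hjaI : j+1 ∈ a ∩ Icc 1 (j+1) := mem_inter.mpr ⟨hja, by simp [mem_Icc]⟩
  have hM1 : 1 ≤ M := card_pos.mpr ⟨_, hjaI⟩
  have htM : t ≤ M := card_le_card (inter_subset_inter_right hq)
  have hMcard : (a ∩ Icc 1 j).card = M - 1 := by
    rw [inter_Icc_erase a j, card_erase_of_mem hjaI]
  have hnum : (1 + ((a ∩ Icc 1 j).card:ℝ)) = (M:ℝ) := by
    rw [hMcard, Nat.cast_sub hM1]; ring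
  -- value of XX a j (π_i q)
  have hval : ∀ i ∈ a ∩ Icc 1 (j+1),
      XX a j (q.map (Equiv.swap i (j+1)).toEmbedding)
        = (M:ℝ) / (1 + ((if i ∈ q then t - 1 else t : ℕ):ℝ)) := by
    intro i hi
    rcases mem_inter.mp hi with ⟨hia, hiI⟩
    rcases mem_Icc.mp hiI with ⟨hi1, hij⟩
    have hcard : ((q.map (Equiv.swap i (j+1)).toEmbedding) ∩ Icc 1 j).card
        = if i ∈ q then t - 1 else t := by
      rw [inter_Icc_erase _ j]
      by_cases hiq : i ∈ q
      · rw [card_erase_of_mem, pi_inter_card hi1 hij, if_pos hiq]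
        exact mem_inter.mpr ⟨(pi_mem_top q).mpr hiq, by simp [mem_Icc]⟩
      · rw [erase_eq_of_notMem, pi_inter_card hi1 hij, if_neg hiq]
        intro hmem
        exact hiq ((pi_mem_top q).mp (mem_inter.mp hmem).1)
    unfold XX
    rw [hcard, hnum]
  rw [Finset.sum_congr rfl hval]
  rw [← sum_filter_add_sum_filter_not (a ∩ Icc 1 (j+1)) (· ∈ q)]
  have hf1 : (a ∩ Icc 1 (j+1)).filter (· ∈ q) = q ∩ Icc 1 (j+1) := by
    rw [filter_mem_eq_inter]
    ext x
    simp only [mem_inter]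
    constructor
    · rintro ⟨⟨h1, h2⟩, h3⟩; exact ⟨h3, h2⟩
    · rintro ⟨h1, h2⟩; exact ⟨⟨hq h1, h2⟩, h1⟩
  have hf2 : (a ∩ Icc 1 (j+1)).filter (fun i => ¬ (i ∈ q)) = (a ∩ Icc 1 (j+1)) \ (q ∩ Icc 1 (j+1)) := by
    ext x
    simp only [mem_filter, mem_sdiff, mem_inter]
    constructor
    · rintro ⟨⟨h1, h2⟩, h3⟩; exact ⟨⟨h1, h2⟩, fun hc => h3 hc.1⟩
    · rintro ⟨⟨h1, h2⟩, h3⟩; exact ⟨⟨h1, h2⟩, fun hc => h3 ⟨hc, h2⟩⟩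
  have hsub : q ∩ Icc 1 (j+1) ⊆ a ∩ Icc 1 (j+1) := inter_subset_inter hq Subset.rfl
  have hc2 : ((a ∩ Icc 1 (j+1)) \ (q ∩ Icc 1 (j+1))).card = M - t := by
    rw [card_sdiff_of_subset hsub]
  rw [hf1, hf2]
  have hg1 : ∀ i ∈ q ∩ Icc 1 (j+1),
      (M:ℝ) / (1 + ((if i ∈ q then t - 1 else t : ℕ):ℝ)) = (M:ℝ)/(1 + ((t-1:ℕ):ℝ)) := by
    intro i hi; rw [if_pos (mem_inter.mp hi).1]
  have hg2 : ∀ i ∈ (a ∩ Icc 1 (j+1)) \ (q ∩ Icc 1 (j+1)),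
      (M:ℝ) / (1 + ((if i ∈ q then t - 1 else t : ℕ):ℝ)) = (M:ℝ)/(1 + (t:ℝ)) := by
    intro i hi
    rcases mem_sdiff.mp hi with ⟨hi1, hi2⟩
    have : i ∉ q := fun hc => hi2 (mem_inter.mpr ⟨hc, (mem_inter.mp hi1).2⟩)
    rw [if_neg this]
  rw [Finset.sum_congr rfl hg1, Finset.sum_congr rfl hg2, Finset.sum_const, Finset.sum_const,
    hc2, nsmul_eq_mul, nsmul_eq_mul]
  have hXX : XX a (j+1) q = (1 + (M:ℝ))/(1 + (t:ℝ)) := by unfold XX; rw [← hM, ← ht]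
  rw [hXX]
  have ht1 : (0:ℝ) < 1 + (t:ℝ) := by positivity
  rcases Nat.eq_zero_or_pos t with h | h
  · simp only [h, Nat.cast_zero, zero_mul, zero_add, add_zero, Nat.sub_zero]
    have h0' : ((q ∩ Icc 1 (j+1)).card : ℝ) = 0 := by rw [← ht, h]; norm_num
    rw [h0', zero_mul, zero_add, div_one, div_one]
    have hMnn : (0:ℝ) ≤ (M:ℝ) := Nat.cast_nonneg M
    nlinarith
  · have he1 : (1 + ((t-1:ℕ):ℝ)) = (t:ℝ) := by rw [Nat.cast_sub h]; push_cast; ring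
    rw [he1, Nat.cast_sub htM]
    have ht0 : (t:ℝ) ≠ 0 := by positivity
    apply le_of_eq
    field_simp
    ring

lemma V_step {n : ℕ} {ρ : ℝ} (h0 : 0 < ρ) (h1 : ρ ≤ 1) {a : Finset ℕ} (ha : a ⊆ Icc 1 n)
    (Jh : Finset ℕ → ℕ)
    (hstop : ∀ j b b', 1 ≤ j → j ≤ n → b ⊆ Icc 1 n → b' ⊆ Icc 1 n →
      (b ∩ Icc 1 j).card = (b' ∩ Icc 1 j).card → b \ Icc 1 j = b' \ Icc 1 j →
      (j ≤ Jh b ↔ j ≤ Jh b'))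
    {j : ℕ} (hj : j + 1 ≤ n) :
    VV n ρ a Jh j ≤ VV n ρ a Jh (j+1) := by
  classical
  unfold VV
  rw [← sum_filter_add_sum_filter_not a.powerset (fun q => Jh (bb n a q) ≤ j)
      (fun q => ww ρ a q * XX a (max (Jh (bb n a q)) j) q),
    ← sum_filter_add_sum_filter_not a.powerset (fun q => Jh (bb n a q) ≤ j)
      (fun q => ww ρ a q * XX a (max (Jh (bb n a q)) (j+1)) q)]
  apply add_le_add
  · have hL : ∀ q ∈ a.powerset.filter (fun q => Jh (bb n a q) ≤ j),
        ww ρ a q * XX a (max (Jh (bb n a q)) j) q = ww ρ a q * XX a j q := by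
      intro q hq
      rw [max_eq_right (mem_filter.mp hq).2]
    have hR : ∀ q ∈ a.powerset.filter (fun q => Jh (bb n a q) ≤ j),
        ww ρ a q * XX a (max (Jh (bb n a q)) (j+1)) q = ww ρ a q * XX a (j+1) q := by
      intro q hq
      rw [max_eq_right ((mem_filter.mp hq).2.trans (Nat.le_succ j))]
    rw [Finset.sum_congr rfl hL, Finset.sum_congr rfl hR]
    by_cases hja : j + 1 ∈ a
    · -- transposition argument
      set Pf := a.powerset.filter (fun q => Jh (bb n a q) ≤ j) with hPf
      set M := (a ∩ Icc 1 (j+1)).card with hM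
      have hjaI : j+1 ∈ a ∩ Icc 1 (j+1) := mem_inter.mpr ⟨hja, by simp [mem_Icc]⟩
      have hM1 : 1 ≤ M := card_pos.mpr ⟨_, hjaI⟩
      have hMpos : (0:ℝ) < (M:ℝ) := by exact_mod_cast hM1
      have hsubq : ∀ q ∈ Pf, q ⊆ a := fun q hq => mem_powerset.mp (mem_filter.mp hq).1
      have hreindex : ∀ i ∈ a ∩ Icc 1 (j+1),
          ∑ q ∈ Pf, ww ρ a q * XX a j q
            = ∑ q ∈ Pf, ww ρ a q * XX a j (q.map (Equiv.swap i (j+1)).toEmbedding) := by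
        intro i hi
        rcases mem_inter.mp hi with ⟨hia, hiI⟩
        rcases mem_Icc.mp hiI with ⟨hi1, hij⟩
        have hmemPf : ∀ q ∈ Pf, q.map (Equiv.swap i (j+1)).toEmbedding ∈ Pf := by
          intro q hq
          rcases mem_filter.mp hq with ⟨hqp, hqle⟩
          have hq' : q ⊆ a := mem_powerset.mp hqp
          have hpiq : q.map (Equiv.swap i (j+1)).toEmbedding ⊆ a := pi_subset hia hja hq'
          refine mem_filter.mpr ⟨mem_powerset.mpr hpiq, ?_⟩
          have hiff := hstop (j+1) (bb n a (q.map (Equiv.swap i (j+1)).toEmbedding)) (bb n a q)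
            (by omega) hj (bb_subset ha hpiq) (bb_subset ha hq') ?_ ?_
          · omega
          · rw [bb_inter_card ha hpiq hj, bb_inter_card ha hq' hj, pi_inter_card hi1 hij]
          · exact bb_swap_sdiff hi1 hij q
        refine Finset.sum_nbij' (fun q => q.map (Equiv.swap i (j+1)).toEmbedding)
          (fun q => q.map (Equiv.swap i (j+1)).toEmbedding) hmemPf hmemPf
          (fun q _ => pi_pi q) (fun q _ => pi_pi q) ?_
        intro q hq
        rw [ww_map, pi_pi]
      -- multiply by M
      rw [← mul_le_mul_iff_right₀ hMpos]
      calc (M:ℝ) * ∑ q ∈ Pf, ww ρ a q * XX a j q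
          = ∑ i ∈ a ∩ Icc 1 (j+1), ∑ q ∈ Pf, ww ρ a q * XX a j q := by
            rw [Finset.sum_const, ← hM, nsmul_eq_mul]
        _ = ∑ i ∈ a ∩ Icc 1 (j+1), ∑ q ∈ Pf, ww ρ a q
              * XX a j (q.map (Equiv.swap i (j+1)).toEmbedding) := by
            exact Finset.sum_congr rfl hreindex
        _ = ∑ q ∈ Pf, ww ρ a q * ∑ i ∈ a ∩ Icc 1 (j+1),
              XX a j (q.map (Equiv.swap i (j+1)).toEmbedding) := by
            rw [Finset.sum_comm]
            exact Finset.sum_congr rfl (fun q _ => by rw [Finset.mul_sum])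
        _ ≤ ∑ q ∈ Pf, ww ρ a q * ((M:ℝ) * XX a (j+1) q) := by
            apply Finset.sum_le_sum
            intro q hq
            exact mul_le_mul_of_nonneg_left (swap_sum_bound hja (hsubq q hq)) (ww_nonneg h0 h1 a q)
        _ = (M:ℝ) * ∑ q ∈ Pf, ww ρ a q * XX a (j+1) q := by
            rw [Finset.mul_sum]
            exact Finset.sum_congr rfl (fun q _ => by ring)
    · apply le_of_eq
      apply Finset.sum_congr rfl
      intro q hq
      have hq' : q ⊆ a := mem_powerset.mp (mem_filter.mp hq).1
      have e1 : a ∩ Icc 1 (j+1) = a ∩ Icc 1 j := inter_Icc_succ_of_not_mem hja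
      have e2 : q ∩ Icc 1 (j+1) = q ∩ Icc 1 j := inter_Icc_succ_of_not_mem (fun h => hja (hq' h))
      unfold XX
      rw [e1, e2]
  · apply le_of_eq
    apply Finset.sum_congr rfl
    intro q hq
    have hgt : ¬ (Jh (bb n a q) ≤ j) := by
      have := (mem_filter.mp hq).2
      simpa using this
    rw [max_eq_left (by omega), max_eq_left (by omega)]

lemma div_key {J mJ t : ℕ} (h1 : t ≤ mJ) (h2 : mJ ≤ J) :
    (1 + (J:ℝ)) / (1 + (((J - mJ) + t :ℕ):ℝ)) ≤ (1 + (mJ:ℝ)) / (1 + (t:ℝ)) := by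
  have hc : (((J - mJ) + t :ℕ):ℝ) = (J:ℝ) - (mJ:ℝ) + (t:ℝ) := by
    push_cast [Nat.cast_sub h2]; ring
  have hJm : (mJ:ℝ) ≤ (J:ℝ) := Nat.cast_le.mpr h2
  have htm : (t:ℝ) ≤ (mJ:ℝ) := Nat.cast_le.mpr h1
  have htn : (0:ℝ) ≤ (t:ℝ) := Nat.cast_nonneg t
  rw [hc, div_le_div_iff₀ (by linarith) (by linarith)]
  nlinarith

lemma inner_bound {n : ℕ} {ρ : ℝ} (h0 : 0 < ρ) (h1 : ρ ≤ 1) {a : Finset ℕ} (ha : a ⊆ Icc 1 n)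
    (Jh : Finset ℕ → ℕ)
    (hJr : ∀ b, b ⊆ Icc 1 n → 1 ≤ Jh b ∧ Jh b ≤ n)
    (hstop : ∀ j b b', 1 ≤ j → j ≤ n → b ⊆ Icc 1 n → b' ⊆ Icc 1 n →
      (b ∩ Icc 1 j).card = (b' ∩ Icc 1 j).card → b \ Icc 1 j = b' \ Icc 1 j →
      (j ≤ Jh b ↔ j ≤ Jh b')) :
    ∑ q ∈ a.powerset, ww ρ a q * ((1 + (Jh (bb n a q) : ℝ))
        / (1 + (((bb n a q) ∩ Icc 1 (Jh (bb n a q))).card : ℝ))) ≤ ρ⁻¹ := by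
  have step1 : ∑ q ∈ a.powerset, ww ρ a q * ((1 + (Jh (bb n a q) : ℝ))
      / (1 + (((bb n a q) ∩ Icc 1 (Jh (bb n a q))).card : ℝ))) ≤ VV n ρ a Jh 0 := by
    apply Finset.sum_le_sum
    intro q hq
    have hq' : q ⊆ a := mem_powerset.mp hq
    have hbs : bb n a q ⊆ Icc 1 n := bb_subset ha hq'
    rcases hJr _ hbs with ⟨hJ1, hJn⟩
    rw [max_eq_left (Nat.zero_le _)]
    apply mul_le_mul_of_nonneg_left _ (ww_nonneg h0 h1 a q)
    rw [bb_inter_card ha hq' hJn]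
    unfold XX
    have hmJ : (a ∩ Icc 1 (Jh (bb n a q))).card ≤ Jh (bb n a q) := by
      calc (a ∩ Icc 1 (Jh (bb n a q))).card ≤ (Icc 1 (Jh (bb n a q))).card :=
            card_le_card inter_subset_right
        _ = Jh (bb n a q) := by rw [Nat.card_Icc]; omega
    have ht : (q ∩ Icc 1 (Jh (bb n a q))).card ≤ (a ∩ Icc 1 (Jh (bb n a q))).card :=
      card_le_card (inter_subset_inter hq' Subset.rfl)
    exact div_key ht hmJ
  have step2 : ∀ j, j ≤ n → VV n ρ a Jh 0 ≤ VV n ρ a Jh j := by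
    intro j
    induction j with
    | zero => intro _; exact le_refl _
    | succ k ih =>
      intro hk
      exact (ih (by omega)).trans (V_step h0 h1 ha Jh hstop hk)
  have step3 : VV n ρ a Jh n ≤ ρ⁻¹ := by
    unfold VV
    have hcongr : ∀ q ∈ a.powerset, ww ρ a q * XX a (max (Jh (bb n a q)) n) q
        = ρ^q.card * (1-ρ)^(a.card - q.card) * ((1 + (a.card:ℝ))/(1 + (q.card:ℝ))) := by
      intro q hq
      have hq' : q ⊆ a := mem_powerset.mp hq
      have hJn := (hJr _ (bb_subset ha hq')).2
      rw [max_eq_right hJn]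
      unfold XX ww
      rw [inter_eq_left.mpr ha, inter_eq_left.mpr (hq'.trans ha)]
    rw [Finset.sum_congr rfl hcongr]
    exact _root_.binom_bound ρ h0 h1 a
  exact step1.trans ((step2 n (le_refl n)).trans step3)

lemma prod_ite_pow {ρ : ℝ} {a q : Finset ℕ} (hq : q ⊆ a) :
    ∏ i ∈ a, (if i ∈ q then ρ else 1-ρ) = ρ^q.card * (1-ρ)^(a.card - q.card) := by
  classical
  rw [← Finset.prod_filter_mul_prod_filter_not a (· ∈ q)]
  have hf1 : a.filter (· ∈ q) = q := by
    rw [filter_mem_eq_inter, inter_eq_right.mpr hq]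
  have hf2 : a.filter (fun i => ¬ (i ∈ q)) = a \ q := by
    ext x; simp only [mem_sdiff, mem_filter]
  rw [hf1, hf2]
  have e1 : ∏ i ∈ q, (if i ∈ q then ρ else 1-ρ) = ρ^q.card := by
    rw [Finset.prod_congr rfl (fun x hx => if_pos hx), Finset.prod_const]
  have e2 : ∏ i ∈ a \ q, (if i ∈ q then ρ else 1-ρ) = (1-ρ)^(a.card - q.card) := by
    rw [Finset.prod_congr rfl (fun x hx => if_neg (mem_sdiff.mp hx).2), Finset.prod_const,
      card_sdiff_of_subset hq]
  rw [e1, e2]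

lemma comb {n : ℕ} {ρ : ℝ} (h0 : 0 < ρ) (h1 : ρ ≤ 1) (ρi : ℕ → ℝ)
    (hlo : ∀ i, ρ ≤ ρi i) (hhi : ∀ i, ρi i ≤ 1)
    (Jh : Finset ℕ → ℕ)
    (hJr : ∀ b, b ⊆ Icc 1 n → 1 ≤ Jh b ∧ Jh b ≤ n)
    (hstop : ∀ j b b', 1 ≤ j → j ≤ n → b ⊆ Icc 1 n → b' ⊆ Icc 1 n →
      (b ∩ Icc 1 j).card = (b' ∩ Icc 1 j).card → b \ Icc 1 j = b' \ Icc 1 j →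
      (j ≤ Jh b ↔ j ≤ Jh b')) :
    ∑ b ∈ (Icc 1 n).powerset, (∏ i ∈ Icc 1 n, (if i ∈ b then ρi i else 1 - ρi i)) *
      ((1 + (Jh b : ℝ)) / (1 + ((b ∩ Icc 1 (Jh b)).card : ℝ))) ≤ ρ⁻¹ := by
  classical
  set p : ℕ → ℝ := fun i => (1 - ρi i)/(1 - ρ) with hp
  have hA : ∀ i, 1 - ρi i = p i * (1 - ρ) := by
    intro i
    rcases eq_or_lt_of_le h1 with he | hlt
    · have : ρi i = 1 := le_antisymm (hhi i) (by rw [← he]; exact hlo i)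
      simp [hp, this, ← he]
    · rw [hp]
      exact (div_mul_cancel₀ (1 - ρi i) (by intro hc; linarith : (1:ℝ) - ρ ≠ 0)).symm
  have hp0 : ∀ i, 0 ≤ p i := by
    intro i
    rcases eq_or_lt_of_le h1 with he | hlt
    · have : ρi i = 1 := le_antisymm (hhi i) (by rw [← he]; exact hlo i)
      simp [hp, this]
    · apply div_nonneg (by linarith [hhi i]) (by linarith)
  have hp1 : ∀ i, p i ≤ 1 := by
    intro i
    rcases eq_or_lt_of_le h1 with he | hlt
    · have : ρi i = 1 := le_antisymm (hhi i) (by rw [← he]; exact hlo i)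
      simp [hp, this]
    · rw [hp, div_le_one (by linarith)]; linarith [hlo i]
  have key : ∀ (i : ℕ) (b : Finset ℕ), (if i ∈ b then ρi i else 1 - ρi i)
      = p i * (if i ∈ b then ρ else 1-ρ) + (1 - p i) * (if i ∈ b then (1:ℝ) else 0) := by
    intro i b
    by_cases hib : i ∈ b
    · simp only [if_pos hib]
      have := hA i
      nlinarith [hA i]
    · simp only [if_neg hib]
      rw [mul_zero, add_zero]
      linarith [hA i]
  -- expand the product
  have expand : ∀ b : Finset ℕ, (∏ i ∈ Icc 1 n, (if i ∈ b then ρi i else 1 - ρi i))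
      = ∑ a ∈ (Icc 1 n).powerset,
          (∏ i ∈ a, (p i * (if i ∈ b then ρ else 1-ρ)))
          * ∏ i ∈ Icc 1 n \ a, ((1 - p i) * (if i ∈ b then (1:ℝ) else 0)) := by
    intro b
    rw [Finset.prod_congr rfl (fun i _ => key i b), Finset.prod_add]
  rw [Finset.sum_congr rfl (fun b _ => by rw [expand b])]
  rw [Finset.sum_congr rfl (fun b _ => Finset.sum_mul _ _ _)]
  rw [Finset.sum_comm]
  -- now fixed a
  have inner : ∀ a ∈ (Icc 1 n).powerset,
      ∑ b ∈ (Icc 1 n).powerset,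
        ((∏ i ∈ a, (p i * (if i ∈ b then ρ else 1-ρ)))
          * ∏ i ∈ Icc 1 n \ a, ((1 - p i) * (if i ∈ b then (1:ℝ) else 0)))
          * ((1 + (Jh b : ℝ)) / (1 + ((b ∩ Icc 1 (Jh b)).card : ℝ)))
      ≤ ((∏ i ∈ a, p i) * ∏ i ∈ Icc 1 n \ a, (1 - p i)) * ρ⁻¹ := by
    intro a hap
    have ha : a ⊆ Icc 1 n := mem_powerset.mp hap
    -- kill terms with Icc 1 n \ a ⊄ b, restrict to filter
    rw [← Finset.sum_filter_add_sum_filter_not ((Icc 1 n).powerset) (fun b => Icc 1 n \ a ⊆ b)]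
    have hzero : ∀ b ∈ ((Icc 1 n).powerset).filter (fun b => ¬ (Icc 1 n \ a ⊆ b)),
        ((∏ i ∈ a, (p i * (if i ∈ b then ρ else 1-ρ)))
          * ∏ i ∈ Icc 1 n \ a, ((1 - p i) * (if i ∈ b then (1:ℝ) else 0)))
          * ((1 + (Jh b : ℝ)) / (1 + ((b ∩ Icc 1 (Jh b)).card : ℝ))) = 0 := by
      intro b hb
      rcases mem_filter.mp hb with ⟨_, hns⟩
      rcases Finset.not_subset.mp hns with ⟨i0, hi0, hi0b⟩
      have : ∏ i ∈ Icc 1 n \ a, ((1 - p i) * (if i ∈ b then (1:ℝ) else 0)) = 0 := by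
        apply Finset.prod_eq_zero hi0
        rw [if_neg hi0b, mul_zero]
      rw [this, mul_zero, zero_mul]
    rw [Finset.sum_congr rfl hzero, Finset.sum_const, smul_zero, add_zero]
    -- on the filter, the cf product is (∏ (1-p)), and reindex to a.powerset
    have hone : ∀ b ∈ ((Icc 1 n).powerset).filter (fun b => Icc 1 n \ a ⊆ b),
        ((∏ i ∈ a, (p i * (if i ∈ b then ρ else 1-ρ)))
          * ∏ i ∈ Icc 1 n \ a, ((1 - p i) * (if i ∈ b then (1:ℝ) else 0)))
          * ((1 + (Jh b : ℝ)) / (1 + ((b ∩ Icc 1 (Jh b)).card : ℝ)))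
        = ((∏ i ∈ a, p i) * ∏ i ∈ Icc 1 n \ a, (1 - p i)) *
            (ww ρ a (b ∩ a) * ((1 + (Jh b : ℝ)) / (1 + ((b ∩ Icc 1 (Jh b)).card : ℝ)))) := by
      intro b hb
      rcases mem_filter.mp hb with ⟨hbp, hsb⟩
      have e1 : ∏ i ∈ Icc 1 n \ a, ((1 - p i) * (if i ∈ b then (1:ℝ) else 0))
          = ∏ i ∈ Icc 1 n \ a, (1 - p i) := by
        apply Finset.prod_congr rfl
        intro i hi
        rw [if_pos (hsb hi), mul_one]
      have e2 : ∏ i ∈ a, (p i * (if i ∈ b then ρ else 1-ρ))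
          = (∏ i ∈ a, p i) * ww ρ a (b ∩ a) := by
        rw [Finset.prod_mul_distrib]
        congr 1
        unfold ww
        rw [← prod_ite_pow (inter_subset_right : b ∩ a ⊆ a)]
        apply Finset.prod_congr rfl
        intro i hi
        by_cases hib : i ∈ b
        · rw [if_pos hib, if_pos (mem_inter.mpr ⟨hib, hi⟩)]
        · rw [if_neg hib, if_neg (fun hc => hib (mem_inter.mp hc).1)]
      rw [e1, e2]
      unfold ww
      ring
    rw [Finset.sum_congr rfl hone, ← Finset.mul_sum]
    apply mul_le_mul_of_nonneg_left _ (by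
      apply mul_nonneg (Finset.prod_nonneg (fun i _ => hp0 i))
        (Finset.prod_nonneg (fun i _ => by linarith [hp1 i])))
    -- reindex filter → a.powerset
    have hre : ∑ b ∈ ((Icc 1 n).powerset).filter (fun b => Icc 1 n \ a ⊆ b),
        ww ρ a (b ∩ a) * ((1 + (Jh b : ℝ)) / (1 + ((b ∩ Icc 1 (Jh b)).card : ℝ)))
        = ∑ q ∈ a.powerset, ww ρ a q * ((1 + (Jh (bb n a q) : ℝ))
            / (1 + (((bb n a q) ∩ Icc 1 (Jh (bb n a q))).card : ℝ))) := by
      refine Finset.sum_nbij' (fun b => b ∩ a) (fun q => bb n a q) ?_ ?_ ?_ ?_ ?_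
      · intro b hb
        exact mem_powerset.mpr inter_subset_right
      · intro q hq
        have hq' : q ⊆ a := mem_powerset.mp hq
        refine mem_filter.mpr ⟨mem_powerset.mpr (bb_subset ha hq'), ?_⟩
        unfold bb; exact subset_union_left
      · -- left inv : bb n a (b ∩ a) = b
        intro b hb
        rcases mem_filter.mp hb with ⟨hbp, hsb⟩
        have hbI : b ⊆ Icc 1 n := mem_powerset.mp hbp
        unfold bb
        ext x
        simp only [mem_union, mem_inter, mem_sdiff]
        constructor
        · rintro (⟨h1, h2⟩ | ⟨h1, h2⟩)
          · exact hsb (mem_sdiff.mpr ⟨h1, h2⟩)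
          · exact h1
        · intro hx
          by_cases hxa : x ∈ a
          · exact Or.inr ⟨hx, hxa⟩
          · exact Or.inl ⟨hbI hx, hxa⟩
      · -- right inv : (bb n a q) ∩ a = q
        intro q hq
        have hq' : q ⊆ a := mem_powerset.mp hq
        unfold bb
        ext x
        simp only [mem_inter, mem_union, mem_sdiff]
        constructor
        · rintro ⟨h1 | h1, h2⟩
          · exact absurd h2 h1.2
          · exact h1
        · intro hx
          exact ⟨Or.inr hx, hq' hx⟩
      · intro b hb
        rcases mem_filter.mp hb with ⟨hbp, hsb⟩
        have hbI : b ⊆ Icc 1 n := mem_powerset.mp hbp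
        have hbbeq : bb n a (b ∩ a) = b := by
          unfold bb
          ext x
          simp only [mem_union, mem_inter, mem_sdiff]
          constructor
          · rintro (⟨h1, h2⟩ | ⟨h1, h2⟩)
            · exact hsb (mem_sdiff.mpr ⟨h1, h2⟩)
            · exact h1
          · intro hx
            by_cases hxa : x ∈ a
            · exact Or.inr ⟨hx, hxa⟩
            · exact Or.inl ⟨hbI hx, hxa⟩
        rw [hbbeq]
    rw [hre]
    exact inner_bound h0 h1 ha Jh hJr hstop
  calc ∑ a ∈ (Icc 1 n).powerset, ∑ b ∈ (Icc 1 n).powerset,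
        ((∏ i ∈ a, (p i * (if i ∈ b then ρ else 1-ρ)))
          * ∏ i ∈ Icc 1 n \ a, ((1 - p i) * (if i ∈ b then (1:ℝ) else 0)))
          * ((1 + (Jh b : ℝ)) / (1 + ((b ∩ Icc 1 (Jh b)).card : ℝ)))
      ≤ ∑ a ∈ (Icc 1 n).powerset, ((∏ i ∈ a, p i) * ∏ i ∈ Icc 1 n \ a, (1 - p i)) * ρ⁻¹ :=
        Finset.sum_le_sum inner
    _ = (∑ a ∈ (Icc 1 n).powerset, (∏ i ∈ a, p i) * ∏ i ∈ Icc 1 n \ a, (1 - p i)) * ρ⁻¹ := by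
        rw [Finset.sum_mul]
    _ = ρ⁻¹ := by
        rw [← Finset.prod_add]
        have : ∀ i ∈ Icc 1 n, p i + (1 - p i) = 1 := fun i _ => by ring
        rw [Finset.prod_congr rfl this, Finset.prod_const_one, one_mul]

end RevStop

def invSpace {Ω : Type*} (S : Ω → ℝ) (B : ℕ → Ω → ℝ) (j n : ℕ) : MeasurableSpace Ω where
  MeasurableSet' T := ∀ ω ω', S ω = S ω' → (∀ i ∈ Finset.Ioc j n, B i ω = B i ω') →
    (ω ∈ T ↔ ω' ∈ T)
  measurableSet_empty := fun _ _ _ _ => Iff.rfl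
  measurableSet_compl := fun T hT ω ω' h1 h2 => not_congr (hT ω ω' h1 h2)
  measurableSet_iUnion := fun f hf ω ω' h1 h2 => by
    simp only [Set.mem_iUnion]
    exact exists_congr (fun i => hf i ω ω' h1 h2)

lemma le_invSpace {Ω : Type*} (S : Ω → ℝ) (B : ℕ → Ω → ℝ) (j n : ℕ) :
    (MeasurableSpace.comap S inferInstance ⊔
      ⨆ i ∈ Finset.Ioc j n, MeasurableSpace.comap (B i) inferInstance)
      ≤ invSpace S B j n := by
  apply sup_le
  · intro T hT
    obtain ⟨A, -, rfl⟩ := hT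
    intro ω ω' h1 _
    simp only [Set.mem_preimage, h1]
  · refine iSup_le fun i => iSup_le fun hi => ?_
    intro T hT
    obtain ⟨A, -, rfl⟩ := hT
    intro ω ω' _ h2
    simp only [Set.mem_preimage, h2 i hi]

/-- Lemma 1 (independent, non-identical case): for independent Bernoulli(ρᵢ) variables
`B 1, ..., B n` with `min_i ρᵢ ≥ ρ > 0` and a stopping time `J` in reverse time with
respect to the reverse filtration `F j = σ(B 1 + ... + B j, B (j+1), ..., B n)`, one has
`E[(1+J)/(1+B 1+...+B J)] ≤ ρ⁻¹`. -/
theorem reverse_stopping_time_bound_indep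
    {Ω : Type*} [MeasurableSpace Ω] (μ : Measure Ω) [IsProbabilityMeasure μ]
    (n : ℕ) (ρ : ℝ) (hρ : 0 < ρ) (B : ℕ → Ω → ℝ)
    (hmeas : ∀ i, Measurable (B i))
    (h01 : ∀ i ω, B i ω = 0 ∨ B i ω = 1)
    (ρi : ℕ → ℝ) (hρi : ∀ i, ρ ≤ ρi i)
    (hber : ∀ i, μ {ω | B i ω = 1} = ENNReal.ofReal (ρi i))
    (hindep : iIndepFun B μ)
    (S : ℕ → Ω → ℝ) (hS : ∀ j ω, S j ω = ∑ i ∈ Finset.Icc 1 j, B i ω)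
    (F : ℕ → MeasurableSpace Ω)
    (hF : ∀ j, F j = MeasurableSpace.comap (S j) inferInstance ⊔
        ⨆ i ∈ Finset.Ioc j n, MeasurableSpace.comap (B i) inferInstance)
    (J : Ω → ℕ) (hJrange : ∀ ω, 1 ≤ J ω ∧ J ω ≤ n)
    (hJstop : ∀ j, MeasurableSet[F j] {ω | J ω = j}) :
    ∫ ω, (1 + (J ω : ℝ)) / (1 + S (J ω) ω) ∂μ ≤ ρ⁻¹ := by
  classical
  -- basic facts
  have hΩ : Nonempty Ω := by
    by_contra hc
    have h1 : μ Set.univ = 1 := measure_univ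
    rw [Set.univ_eq_empty_iff.mpr (not_nonempty_iff.mp hc), measure_empty] at h1
    simp at h1
  obtain ⟨ω₀⟩ := hΩ
  have hn1 : 1 ≤ n := le_trans (hJrange ω₀).1 (hJrange ω₀).2
  have hρin : ∀ i, 0 ≤ ρi i := fun i => le_trans hρ.le (hρi i)
  have hρi1 : ∀ i, ρi i ≤ 1 := by
    intro i
    have h : ENNReal.ofReal (ρi i) ≤ 1 := by rw [← hber i]; exact prob_le_one
    exact ENNReal.ofReal_le_one.mp h
  have hρ1 : ρ ≤ 1 := (hρi 0).trans (hρi1 0)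
  -- invariance of F j measurable sets
  have hinv : ∀ j (T : Set Ω), MeasurableSet[F j] T → ∀ ω ω', S j ω = S j ω' →
      (∀ i ∈ Finset.Ioc j n, B i ω = B i ω') → (ω ∈ T ↔ ω' ∈ T) := by
    intro j T hT
    rw [hF j] at hT
    exact le_invSpace (S j) B j n T hT
  -- S as a card
  have hScard : ∀ (ω : Ω) (j : ℕ), j ≤ n →
      S j ω = ((((Icc 1 n).filter (fun i => B i ω = 1)) ∩ Icc 1 j).card : ℝ) := by
    intro ω j hj
    rw [hS]
    have e : ((Icc 1 n).filter (fun i => B i ω = 1)) ∩ Icc 1 j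
        = (Icc 1 j).filter (fun i => B i ω = 1) := by
      ext x
      simp only [mem_inter, mem_filter, mem_Icc]
      constructor
      · rintro ⟨⟨_, h2⟩, h3⟩; exact ⟨h3, h2⟩
      · rintro ⟨h3, h2⟩; exact ⟨⟨⟨h3.1, h3.2.trans hj⟩, h2⟩, h3⟩
    rw [e, ← Finset.sum_boole]
    apply Finset.sum_congr rfl
    intro i _
    rcases h01 i ω with h | h <;> simp [h]
  -- invariance of {J ≥ j}
  have hJge : ∀ j, 1 ≤ j → j ≤ n → ∀ ω ω', S j ω = S j ω' →
      (∀ i ∈ Finset.Ioc j n, B i ω = B i ω') → (j ≤ J ω ↔ j ≤ J ω') := by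
    intro j hj1 hjn ω ω' hSe hBe
    have hag : ∀ (v w : Ω), S j v = S j w → (∀ i ∈ Finset.Ioc j n, B i v = B i w) →
        ∀ k, j ≤ k → k ≤ n → S k v = S k w ∧ ∀ i ∈ Finset.Ioc k n, B i v = B i w := by
      intro v w hSe hBe k hjk hkn
      constructor
      · rw [hS, hS]
        have hsplit : Icc 1 k = Icc 1 j ∪ Ioc j k := by
          ext x; simp only [mem_union, mem_Icc, mem_Ioc]; omega
        have hdisj : Disjoint (Icc 1 j) (Ioc j k) := by
          apply disjoint_left.mpr
          intro x hx hx'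
          rcases mem_Icc.mp hx with ⟨_, h2⟩
          exact absurd (mem_Ioc.mp hx').1 (by omega)
        rw [hsplit, Finset.sum_union hdisj, Finset.sum_union hdisj]
        congr 1
        · rw [hS, hS] at hSe; exact hSe
        · apply Finset.sum_congr rfl
          intro i hi
          rcases mem_Ioc.mp hi with ⟨h1, h2⟩
          exact hBe i (mem_Ioc.mpr ⟨h1, h2.trans hkn⟩)
      · intro i hi
        rcases mem_Ioc.mp hi with ⟨h1, h2⟩
        exact hBe i (mem_Ioc.mpr ⟨by omega, h2⟩)
    constructor
    · intro h
      obtain ⟨hSk, hBk⟩ := hag ω ω' hSe hBe (J ω) h (hJrange ω).2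
      have h2 : ω' ∈ {ω' | J ω' = J ω} :=
        (hinv (J ω) _ (hJstop (J ω)) ω ω' hSk hBk).mp rfl
      have h3 : J ω' = J ω := h2
      omega
    · intro h
      obtain ⟨hSk, hBk⟩ := hag ω' ω (hSe.symm) (fun i hi => (hBe i hi).symm) (J ω') h (hJrange ω').2
      have h2 : ω ∈ {ω | J ω = J ω'} :=
        (hinv (J ω') _ (hJstop (J ω')) ω' ω hSk hBk).mp rfl
      have h3 : J ω = J ω' := h2
      omega
  -- definition of Jh
  set Q : ℕ → Finset ℕ → Prop := fun j b => ∃ ω, j ≤ J ω ∧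
      S j ω = ((b ∩ Icc 1 j).card : ℝ) ∧
      ∀ i ∈ Finset.Ioc j n, B i ω = (if i ∈ b then 1 else 0) with hQdef
  set Jh : Finset ℕ → ℕ := fun b =>
    if h : (((Icc 1 n).filter (fun j => Q j b)).Nonempty)
    then ((Icc 1 n).filter (fun j => Q j b)).max' h else 1 with hJhdef
  -- Jh recovers J on realized configurations
  have hwit : ∀ ω, Jh ((Icc 1 n).filter (fun i => B i ω = 1)) = J ω := by
    intro ω
    set b := (Icc 1 n).filter (fun i => B i ω = 1) with hb
    have hQiff : ∀ j ∈ Icc 1 n, (Q j b ↔ j ≤ J ω) := by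
      intro j hj
      rcases mem_Icc.mp hj with ⟨hj1, hjn⟩
      constructor
      · rintro ⟨ω', h1, h2, h3⟩
        have hS2 : S j ω' = S j ω := by rw [h2, hScard ω j hjn]
        have hB2 : ∀ i ∈ Finset.Ioc j n, B i ω' = B i ω := by
          intro i hi
          rcases mem_Ioc.mp hi with ⟨hij, hin⟩
          rw [h3 i hi]
          by_cases hmem : i ∈ b
          · rw [if_pos hmem]
            exact ((mem_filter.mp hmem).2).symm
          · rw [if_neg hmem]
            rcases h01 i ω with h | h
            · exact h.symm
            · exact absurd (mem_filter.mpr ⟨mem_Icc.mpr ⟨by omega, hin⟩, h⟩) hmem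
        exact (hJge j hj1 hjn ω' ω hS2 hB2).mp h1
      · intro h
        refine ⟨ω, h, by rw [hScard ω j hjn], ?_⟩
        intro i hi
        rcases mem_Ioc.mp hi with ⟨hij, hin⟩
        by_cases hmem : i ∈ b
        · rw [if_pos hmem]
          exact (mem_filter.mp hmem).2
        · rw [if_neg hmem]
          rcases h01 i ω with hh | hh
          · exact hh
          · exact absurd (mem_filter.mpr ⟨mem_Icc.mpr ⟨by omega, hin⟩, hh⟩) hmem
    have hfe : (Icc 1 n).filter (fun j => Q j b) = Icc 1 (J ω) := by
      ext j
      simp only [mem_filter, mem_Icc]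
      constructor
      · rintro ⟨hj, hq⟩
        exact ⟨hj.1, (hQiff j (mem_Icc.mpr hj)).mp hq⟩
      · rintro ⟨h1, h2⟩
        have hj : j ∈ Icc 1 n := mem_Icc.mpr ⟨h1, h2.trans (hJrange ω).2⟩
        exact ⟨mem_Icc.mp hj, (hQiff j hj).mpr h2⟩
    rw [hJhdef]
    simp only [hfe]
    rw [dif_pos ⟨J ω, mem_Icc.mpr ⟨(hJrange ω).1, le_refl _⟩⟩]
    apply le_antisymm
    · apply Finset.max'_le
      intro y hy
      exact (mem_Icc.mp hy).2
    · apply Finset.le_max'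
      exact mem_Icc.mpr ⟨(hJrange ω).1, le_refl _⟩
  -- range of Jh
  have hJhr : ∀ b, b ⊆ Icc 1 n → 1 ≤ Jh b ∧ Jh b ≤ n := by
    intro b _
    rw [hJhdef]
    simp only
    split_ifs with h
    · have hm := Finset.max'_mem _ h
      have := (mem_filter.mp hm).1
      exact mem_Icc.mp this
    · exact ⟨le_refl 1, hn1⟩
  -- stopping property of Jh
  have hJhstop : ∀ j (b b' : Finset ℕ), 1 ≤ j → j ≤ n → b ⊆ Icc 1 n → b' ⊆ Icc 1 n →
      (b ∩ Icc 1 j).card = (b' ∩ Icc 1 j).card → b \ Icc 1 j = b' \ Icc 1 j →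
      (j ≤ Jh b ↔ j ≤ Jh b') := by
    intro j b b' hj1 hjn hbs hbs' hcard hsd
    have hQeq : ∀ k, j ≤ k → k ≤ n → (Q k b ↔ Q k b') := by
      intro k hjk hkn
      have hckey : (b ∩ Icc 1 k).card = (b' ∩ Icc 1 k).card := by
        have e : ∀ (c : Finset ℕ), c ∩ Icc 1 k
            = (c ∩ Icc 1 j) ∪ ((c \ Icc 1 j) ∩ Ioc j k) := by
          intro c
          ext x
          simp only [mem_union, mem_inter, mem_sdiff, mem_Icc, mem_Ioc]
          constructor
          · rintro ⟨hc, h1, h2⟩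
            by_cases hxj : x ≤ j
            · exact Or.inl ⟨hc, h1, hxj⟩
            · exact Or.inr ⟨⟨hc, fun hh => hxj hh.2⟩, by omega, h2⟩
          · rintro (⟨hc, h1, h2⟩ | ⟨⟨hc, _⟩, h1, h2⟩)
            · exact ⟨hc, h1, by omega⟩
            · exact ⟨hc, by omega, h2⟩
        have hd : ∀ (c : Finset ℕ), Disjoint (c ∩ Icc 1 j) ((c \ Icc 1 j) ∩ Ioc j k) := by
          intro c
          apply disjoint_left.mpr
          intro x hx hx'
          exact (mem_sdiff.mp (mem_inter.mp hx').1).2 (mem_inter.mp hx).2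
        rw [e b, e b', card_union_of_disjoint (hd b), card_union_of_disjoint (hd b'),
          hcard, hsd]
      have hmemeq : ∀ i, k < i → i ≤ n → (i ∈ b ↔ i ∈ b') := by
        intro i h1 h2
        have hnic : i ∉ Icc 1 j := by simp only [mem_Icc]; omega
        constructor
        · intro h
          have hx : i ∈ b \ Icc 1 j := mem_sdiff.mpr ⟨h, hnic⟩
          rw [hsd] at hx
          exact (mem_sdiff.mp hx).1
        · intro h
          have hx : i ∈ b' \ Icc 1 j := mem_sdiff.mpr ⟨h, hnic⟩
          rw [← hsd] at hx
          exact (mem_sdiff.mp hx).1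
      constructor
      · rintro ⟨ω, h1, h2, h3⟩
        refine ⟨ω, h1, by rw [h2, hckey], ?_⟩
        intro i hi
        rcases mem_Ioc.mp hi with ⟨hik, hin⟩
        rw [h3 i hi]
        by_cases hib : i ∈ b
        · rw [if_pos hib, if_pos ((hmemeq i hik hin).mp hib)]
        · rw [if_neg hib, if_neg (fun hc => hib ((hmemeq i hik hin).mpr hc))]
      · rintro ⟨ω, h1, h2, h3⟩
        refine ⟨ω, h1, by rw [h2, ← hckey], ?_⟩
        intro i hi
        rcases mem_Ioc.mp hi with ⟨hik, hin⟩
        rw [h3 i hi]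
        by_cases hib : i ∈ b'
        · rw [if_pos hib, if_pos ((hmemeq i hik hin).mpr hib)]
        · rw [if_neg hib, if_neg (fun hc => hib ((hmemeq i hik hin).mp hc))]
    rcases eq_or_lt_of_le hj1 with he | hlt
    · rw [← he]
      constructor
      · intro _; exact (hJhr b' hbs').1
      · intro _; exact (hJhr b hbs).1
    · have hiff : ∀ (c : Finset ℕ),
          (j ≤ Jh c ↔ ∃ k, k ∈ (Icc 1 n).filter (fun k => Q k c) ∧ j ≤ k) := by
        intro c
        rw [hJhdef]
        simp only
        split_ifs with h
        · constructor
          · intro hle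
            exact ⟨_, Finset.max'_mem _ h, hle⟩
          · rintro ⟨k, hk, hjk⟩
            exact hjk.trans (Finset.le_max' _ _ hk)
        · constructor
          · intro hle; omega
          · rintro ⟨k, hk, _⟩
            exact absurd ⟨k, hk⟩ h
      rw [hiff b, hiff b']
      constructor
      · rintro ⟨k, hk, hjk⟩
        rcases mem_filter.mp hk with ⟨hkI, hq⟩
        exact ⟨k, mem_filter.mpr ⟨hkI, (hQeq k hjk (mem_Icc.mp hkI).2).mp hq⟩, hjk⟩
      · rintro ⟨k, hk, hjk⟩
        rcases mem_filter.mp hk with ⟨hkI, hq⟩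
        exact ⟨k, mem_filter.mpr ⟨hkI, (hQeq k hjk (mem_Icc.mp hkI).2).mpr hq⟩, hjk⟩
  -- the events
  set E : Finset ℕ → Set Ω :=
    fun b => {ω | ∀ i ∈ Icc 1 n, B i ω = (if i ∈ b then (1:ℝ) else 0)} with hEdef
  have hEset : ∀ b, E b = ⋂ i ∈ (Icc 1 n : Finset ℕ),
      (B i) ⁻¹' {(if i ∈ b then (1:ℝ) else 0)} := by
    intro b
    ext ω
    simp only [hEdef, Set.mem_setOf_eq, Set.mem_iInter, Set.mem_preimage,
      Set.mem_singleton_iff]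
  have hEmeas : ∀ b, MeasurableSet (E b) := by
    intro b
    rw [hEset b]
    exact Set.Finite.measurableSet_biInter (Finset.finite_toSet _)
      (fun i _ => (hmeas i) (measurableSet_singleton _))
  -- pointwise identity
  have hpt : ∀ ω, (1 + (J ω : ℝ)) / (1 + S (J ω) ω)
      = ∑ b ∈ (Icc 1 n).powerset, Set.indicator (E b)
          (fun _ => (1 + (Jh b : ℝ)) / (1 + ((b ∩ Icc 1 (Jh b)).card : ℝ))) ω := by
    intro ω
    set β := (Icc 1 n).filter (fun i => B i ω = 1) with hβ
    have hβp : β ∈ (Icc 1 n).powerset := mem_powerset.mpr (filter_subset _ _)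
    have hωβ : ω ∈ E β := by
      simp only [hEdef, Set.mem_setOf_eq]
      intro i hi
      by_cases hib : i ∈ β
      · rw [if_pos hib]
        exact (mem_filter.mp hib).2
      · rw [if_neg hib]
        rcases h01 i ω with h | h
        · exact h
        · exact absurd (mem_filter.mpr ⟨hi, h⟩) hib
    have huniq : ∀ b, b ∈ (Icc 1 n).powerset → b ≠ β → ω ∉ E b := by
      intro b hb hne hωb
      simp only [hEdef, Set.mem_setOf_eq] at hωb
      apply hne
      ext x
      constructor
      · intro hxb
        have hxI : x ∈ Icc 1 n := mem_powerset.mp hb hxb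
        have hx := hωb x hxI
        rw [if_pos hxb] at hx
        exact mem_filter.mpr ⟨hxI, hx⟩
      · intro hxβ
        rcases mem_filter.mp hxβ with ⟨hxI, hx1⟩
        by_contra hxb
        have hx := hωb x hxI
        rw [if_neg hxb] at hx
        rw [hx] at hx1
        norm_num at hx1
    rw [Finset.sum_eq_single β]
    · rw [Set.indicator_of_mem hωβ]
      rw [hwit ω, hScard ω (J ω) (hJrange ω).2]
    · intro b hb hne
      rw [Set.indicator_of_notMem (huniq b hb hne)]
    · intro hβn
      exact absurd hβp hβn
  -- integral computation
  have hint : ∫ ω, (1 + (J ω : ℝ)) / (1 + S (J ω) ω) ∂μ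
      = ∑ b ∈ (Icc 1 n).powerset, (μ (E b)).toReal *
          ((1 + (Jh b : ℝ)) / (1 + ((b ∩ Icc 1 (Jh b)).card : ℝ))) := by
    rw [integral_congr_ae (ae_of_all μ hpt)]
    rw [integral_finset_sum _ (fun b _ => (integrable_const _).indicator (hEmeas b))]
    apply Finset.sum_congr rfl
    intro b _
    rw [integral_indicator_const _ (hEmeas b), smul_eq_mul]; rfl
  -- independence: measure of E b
  have hμE : ∀ b, b ∈ (Icc 1 n).powerset →
      (μ (E b)).toReal = ∏ i ∈ Icc 1 n, (if i ∈ b then ρi i else 1 - ρi i) := by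
    intro b _
    rw [hEset b,
      hindep.measure_inter_preimage_eq_mul (Icc 1 n) (fun i _ => measurableSet_singleton _),
      ENNReal.toReal_prod]
    apply Finset.prod_congr rfl
    intro i _
    by_cases hib : i ∈ b
    · rw [if_pos hib, if_pos hib]
      have h1 : (B i) ⁻¹' {(1:ℝ)} = {ω | B i ω = 1} := by
        ext ω; simp [Set.mem_preimage]
      rw [h1, hber i, ENNReal.toReal_ofReal (hρin i)]
    · rw [if_neg hib, if_neg hib]
      have hcompl : (B i) ⁻¹' {(0:ℝ)} = {ω | B i ω = 1}ᶜ := by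
        ext ω
        simp only [Set.mem_preimage, Set.mem_singleton_iff, Set.mem_compl_iff,
          Set.mem_setOf_eq]
        constructor
        · intro h h1
          rw [h] at h1
          norm_num at h1
        · intro h
          rcases h01 i ω with hh | hh
          · exact hh
          · exact absurd hh h
      have hms : MeasurableSet {ω | B i ω = 1} := by
        have : {ω | B i ω = 1} = (B i) ⁻¹' {(1:ℝ)} := by ext ω; simp [Set.mem_preimage]
        rw [this]
        exact (hmeas i) (measurableSet_singleton _)
      rw [hcompl, prob_compl_eq_one_sub hms, hber i,
        ENNReal.toReal_sub_of_le (by rw [← hber i]; exact prob_le_one) (by norm_num),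
        ENNReal.toReal_ofReal (hρin i), ENNReal.toReal_one]
  -- conclude via the combinatorial lemma
  rw [hint, Finset.sum_congr rfl (fun b hb => by rw [hμE b hb])]
  exact RevStop.comb hρ hρ1 ρi hρi hρi1 Jh (fun b hb => hJhr b hb) hJhstop
end

section
/- Consider the Lasso problem min_γ (1/2)‖y − Xγ‖_2^2 + λ‖γ‖_1 where X^⊤X is invertible. A vector γ̂ supported on S with sign vector v̂_S = sign(γ̂_S) satisfies the KKT stationarity conditions, and its support is contained in S = supp(γ*), provided that for all v̂_S ∈ [−1,1]^S: ‖λ X_{S^c}^⊤ X_S (X_S^⊤ X_S)^{-1} v̂_S + X_{S^c}^⊤ (I − Π_S)(Xε)‖_∞ < λ, where Π_S = X_S(X_S^⊤ X_S)^{-1} X_S^⊤ and y = X_S γ*_S + X ε. -/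
open Matrix

section LassoHelpers

private lemma lasso_aux_key (a B c0 : ℝ) (ha : 0 ≤ a) (hc0 : 0 < c0)
    (h : ∀ s : ℝ, 0 < s → s < c0 → 0 ≤ (1/2) * a * s^2 + B * s) : 0 ≤ B := by
  by_contra hB
  push_neg at hB
  set s : ℝ := min (c0/2) (-B/(a+1)) with hs
  have hs1 : 0 < s := lt_min (by linarith) (div_pos (by linarith) (by linarith))
  have hs2 : s < c0 := lt_of_le_of_lt (min_le_left _ _) (by linarith)
  have hs3 : s ≤ -B/(a+1) := min_le_right _ _
  have hs4 : s * (a+1) ≤ -B := by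
    rw [← le_div_iff₀ (by linarith)] ; exact hs3
  have h' := h s hs1 hs2
  nlinarith [mul_pos hs1 hs1, mul_le_mul_of_nonneg_left hs4 (le_of_lt hs1)]

private lemma lasso_foc (a b c lam : ℝ) (ha : 0 ≤ a) (hlam : 0 < lam)
    (h : ∀ t : ℝ, 0 ≤ (1/2) * a * t^2 + b * t + lam * (|c + t| - |c|)) :
    |b| ≤ lam ∧ b * c = -(lam * |c|) := by
  have hb1 : 0 ≤ b + lam := by
    refine lasso_aux_key a (b + lam) 1 ha one_pos (fun s hs _ => ?_)
    have h1 := h s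
    have h2 : |c + s| - |c| ≤ s := by
      have := abs_add_le c s
      rw [abs_of_pos hs] at this; linarith
    nlinarith
  have hb2 : 0 ≤ lam - b := by
    refine lasso_aux_key a (lam - b) 1 ha one_pos (fun s hs _ => ?_)
    have h1 := h (-s)
    have h2 : |c + -s| - |c| ≤ s := by
      have h3 : |c + -s| ≤ |c| + |(-s)| := abs_add_le c (-s)
      rw [abs_neg, abs_of_pos hs] at h3; linarith
    nlinarith
  have habs : |b| ≤ lam := abs_le.2 ⟨by linarith, by linarith⟩
  refine ⟨habs, ?_⟩
  rcases lt_trichotomy c 0 with hc | hc | hc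
  · have hb3 : 0 ≤ b - lam := by
      refine lasso_aux_key a (b - lam) (-c) ha (by linarith) (fun s hs hsc => ?_)
      have h1 := h s
      have h2 : |c + s| = |c| - s := by
        rw [abs_of_neg hc, abs_of_neg (by linarith : c + s < 0)]; ring
      rw [h2] at h1; nlinarith
    have hb : b = lam := by linarith
    rw [hb, abs_of_neg hc]; ring
  · simp [hc]
  · have hb3 : 0 ≤ -(b + lam) := by
      refine lasso_aux_key a (-(b + lam)) c ha hc (fun s hs hsc => ?_)
      have h1 := h (-s)
      have h2 : |c + -s| = |c| - s := by
        rw [abs_of_pos hc, abs_of_pos (by linarith : (0:ℝ) < c + -s)]; ring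
      rw [h2] at h1; nlinarith
    have hb : b = -lam := by linarith
    rw [hb, abs_of_pos hc]; ring

private lemma lasso_exists_min {ι : Type*} [Fintype ι] (q : (ι → ℝ) → ℝ)
    (hq : Continuous q) (hq0 : ∀ β, 0 ≤ q β) (lam : ℝ) (hlam : 0 < lam) :
    ∃ β0 : ι → ℝ, ∀ β, q β0 + lam * ∑ j, |β0 j| ≤ q β + lam * ∑ j, |β j| := by
  set g : (ι → ℝ) → ℝ := fun β => q β + lam * ∑ j, |β j| with hg
  have hgnn : ∀ β, lam * ∑ j, |β j| ≤ g β := fun β => by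
    have := hq0 β; simp only [hg]; linarith
  have hgc : Continuous g := by
    refine hq.add (continuous_const.mul ?_)
    exact continuous_finset_sum _ fun j _ => (continuous_apply j).abs
  set R : ℝ := g 0 / lam with hR
  have hg00 : 0 ≤ g 0 := by
    have h1 := hq0 0
    have h2 : (0:ℝ) ≤ lam * ∑ j, |(0 : ι → ℝ) j| := by positivity
    simp only [hg]; linarith
  have hR0 : 0 ≤ R := div_nonneg hg00 hlam.le
  have hK : IsCompact (Metric.closedBall (0 : ι → ℝ) R) := isCompact_closedBall _ _
  have hne : (Metric.closedBall (0 : ι → ℝ) R).Nonempty :=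
    ⟨0, Metric.mem_closedBall_self hR0⟩
  obtain ⟨β0, hβ0mem, hβ0⟩ := hK.exists_isMinOn hne hgc.continuousOn
  refine ⟨β0, fun β => ?_⟩
  by_cases hb : β ∈ Metric.closedBall (0 : ι → ℝ) R
  · exact hβ0 hb
  · have h0mem : (0 : ι → ℝ) ∈ Metric.closedBall (0 : ι → ℝ) R :=
      Metric.mem_closedBall_self hR0
    have h1 : g β0 ≤ g 0 := hβ0 h0mem
    have hnorm : R < ‖β‖ := by
      by_contra hcon
      push_neg at hcon
      exact hb (by simpa [Metric.mem_closedBall, dist_zero_right] using hcon)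
    have hsum : ‖β‖ ≤ ∑ j, |β j| := by
      rcases isEmpty_or_nonempty ι with hI | hI
      · simp [Subsingleton.elim β 0]
      · refine (pi_norm_le_iff_of_nonneg (by positivity)).2 fun i => ?_
        rw [Real.norm_eq_abs]
        exact Finset.single_le_sum (fun j _ => abs_nonneg (β j)) (Finset.mem_univ i)
    have h2 : g 0 < lam * ∑ j, |β j| := by
      have : g 0 = lam * R := by rw [hR]; field_simp
      rw [this]
      exact mul_lt_mul_of_pos_left (lt_of_lt_of_le hnorm hsum) hlam
    have h3 := hgnn β
    calc g β0 ≤ g 0 := h1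
      _ ≤ g β := by linarith

private lemma lasso_kkt {mm : ℕ} {ι : Type*} [Fintype ι] [DecidableEq ι]
    (M : Matrix (Fin mm) ι ℝ) (y : Fin mm → ℝ) (lam : ℝ) (hlam : 0 < lam) :
    ∃ β v : ι → ℝ, (∀ j, |v j| ≤ 1) ∧ (∀ j, v j * β j = |β j|) ∧
      (∀ j, ∑ k, M k j * (y k - M.mulVec β k) = lam * v j) ∧
      (∀ γ : ι → ℝ, (1/2) * (∑ k, (y k - M.mulVec β k)^2) + lam * ∑ i, |β i| ≤
        (1/2) * (∑ k, (y k - M.mulVec γ k)^2) + lam * ∑ i, |γ i|) := by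
  set q : (ι → ℝ) → ℝ := fun β => (1/2) * ∑ k, (y k - M.mulVec β k)^2 with hq
  have hqc : Continuous q := by
    refine continuous_const.mul (continuous_finset_sum _ fun k _ => ?_)
    refine ((continuous_const.sub ?_).pow 2)
    simp only [Matrix.mulVec, dotProduct]
    exact continuous_finset_sum _ fun j _ => continuous_const.mul (continuous_apply j)
  have hq0 : ∀ β, 0 ≤ q β := fun β => by positivity
  obtain ⟨β, hβ⟩ := lasso_exists_min q hqc hq0 lam hlam
  set b : ι → ℝ := fun j => ∑ k, (M.mulVec β k - y k) * M k j with hb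
  have hfoc : ∀ j, |b j| ≤ lam ∧ b j * β j = -(lam * |β j|) := by
    intro j
    refine lasso_foc (∑ k, (M k j)^2) (b j) (β j) lam (by positivity) hlam (fun t => ?_)
    have hpert := hβ (β + t • (Pi.single j 1 : ι → ℝ))
    have hmv : ∀ k, M.mulVec (β + t • (Pi.single j 1 : ι → ℝ)) k = M.mulVec β k + t * M k j := by
      intro k
      rw [Matrix.mulVec_add, Matrix.mulVec_smul]
      simp [Matrix.mulVec_single, smul_eq_mul]
    have hqpert : q (β + t • (Pi.single j 1 : ι → ℝ)) =
        q β + b j * t + (1/2) * (∑ k, (M k j)^2) * t^2 := by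
      simp only [hq, hb]
      have : ∀ k, (y k - M.mulVec (β + t • (Pi.single j 1 : ι → ℝ)) k)^2 =
          (y k - M.mulVec β k)^2 + 2 * ((M.mulVec β k - y k) * M k j) * t
            + (M k j)^2 * t^2 := by
        intro k; rw [hmv k]; ring
      rw [Finset.sum_congr rfl fun k _ => this k]
      rw [Finset.sum_add_distrib, Finset.sum_add_distrib, ← Finset.sum_mul, ← Finset.sum_mul,
        ← Finset.mul_sum]
      ring
    have hsumpert : ∑ i, |(β + t • (Pi.single j 1 : ι → ℝ)) i| =
        (∑ i, |β i|) + (|β j + t| - |β j|) := by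
      have hji : ∀ i, (β + t • (Pi.single j 1 : ι → ℝ)) i = if i = j then β j + t else β i := by
        intro i
        by_cases hij : i = j <;> simp [hij, Pi.single_apply]
      rw [Finset.sum_congr rfl fun i _ => congrArg abs (hji i)]
      rw [← Finset.add_sum_erase _ _ (Finset.mem_univ j),
        ← Finset.add_sum_erase _ (fun i => |β i|) (Finset.mem_univ j)]
      simp only [if_pos rfl, eq_self_iff_true, if_true]
      rw [Finset.sum_congr rfl fun i hi => by
        rw [if_neg (Finset.mem_erase.1 hi).1]]
      ring
    rw [hqpert, hsumpert] at hpert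
    nlinarith [hpert]
  refine ⟨β, fun j => -(b j) / lam, fun j => ?_, fun j => ?_, fun j => ?_, hβ⟩
  · rw [abs_div, abs_neg, abs_of_pos hlam, div_le_one hlam]
    exact (hfoc j).1
  · have := (hfoc j).2
    field_simp
    linarith
  · have : ∑ k, M k j * (y k - M.mulVec β k) = -(b j) := by
      simp only [hb, ← Finset.sum_neg_distrib]
      exact Finset.sum_congr rfl fun k _ => by ring
    rw [this]; field_simp

end LassoHelpers

/-- Primal-dual witness / strict dual feasibility for the Lasso. With
`y = X_S γ*_S + Xε` (`γ*` supported on `S`) and `XᵀX` invertible, if for every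
`v̂_S ∈ [−1,1]^S` and every `i ∈ Sᶜ`
`|λ (X_{Sᶜ}ᵀ X_S (X_Sᵀ X_S)⁻¹ v̂_S)_i + (X_{Sᶜ}ᵀ (I − Π_S)(Xε))_i| < λ`
where `Π_S = X_S (X_Sᵀ X_S)⁻¹ X_Sᵀ`, then any minimizer `γ̂` of the Lasso objective
`(1/2)‖y − Xγ‖² + λ‖γ‖₁` vanishes outside `S`, i.e. `supp(γ̂) ⊆ S`. -/
theorem lasso_support_subset (m p : ℕ) (X : Matrix (Fin m) (Fin p) ℝ)
    (S : Finset (Fin p)) (γstar ε : Fin p → ℝ) (lam : ℝ) (hlam : 0 < lam)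
    (hsupp : ∀ i ∉ S, γstar i = 0)
    (hinv : IsUnit (Xᵀ * X).det)
    (y : Fin m → ℝ) (hy : y = X.mulVec γstar + X.mulVec ε)
    (XS : Matrix (Fin m) {j // j ∈ S} ℝ) (hXS : XS = Matrix.of fun i j => X i j.1)
    (hcond : ∀ v : {j // j ∈ S} → ℝ, (∀ j, |v j| ≤ 1) → ∀ i ∉ S,
      |lam * ((fun k => X k i) ⬝ᵥ XS.mulVec (((XSᵀ * XS)⁻¹).mulVec v)) +
          (fun k => X k i) ⬝ᵥ ((1 - XS * (XSᵀ * XS)⁻¹ * XSᵀ).mulVec (X.mulVec ε))| < lam)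
    (γhat : Fin p → ℝ)
    (hmin : ∀ γ : Fin p → ℝ,
      (1 / 2) * (∑ k, (y k - X.mulVec γhat k) ^ 2) + lam * ∑ i, |γhat i| ≤
      (1 / 2) * (∑ k, (y k - X.mulVec γ k) ^ 2) + lam * ∑ i, |γ i|) :
    ∀ i ∉ S, γhat i = 0 := by
  classical
  have hlamne : lam ≠ 0 := ne_of_gt hlam
  -- extension-by-zero computation
  have hext : ∀ (u : Fin p → ℝ), (∀ i ∉ S, u i = 0) →
      ∀ k, X.mulVec u k = XS.mulVec (fun j : {j // j ∈ S} => u j.1) k := by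
    intro u hu k
    simp only [Matrix.mulVec, dotProduct, hXS, Matrix.of_apply]
    rw [Finset.sum_coe_sort S (fun i => X k i * u i)]
    exact (Finset.sum_subset (Finset.subset_univ S)
      (fun i _ hi => by rw [hu i hi, mul_zero])).symm
  -- injectivity of X
  have hXinj : ∀ u : Fin p → ℝ, X.mulVec u = 0 → u = 0 := by
    intro u hu
    have hinj : Function.Injective (Xᵀ * X).mulVec :=
      Matrix.mulVec_injective_iff_isUnit.2 ((Matrix.isUnit_iff_isUnit_det _).2 hinv)
    apply hinj
    rw [← Matrix.mulVec_mulVec, hu, Matrix.mulVec_zero, Matrix.mulVec_zero]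
  -- invertibility of XSᵀ * XS
  have hAdet : IsUnit (XSᵀ * XS).det := by
    rw [← Matrix.isUnit_iff_isUnit_det, ← Matrix.mulVec_injective_iff_isUnit]
    intro w1 w2 hw
    have hsub : (XSᵀ * XS).mulVec (w1 - w2) = 0 := by
      rw [Matrix.mulVec_sub, hw, sub_self]
    set w := w1 - w2 with hwdef
    have hXSw : XS.mulVec w = 0 := by
      have h1 : dotProduct w ((XSᵀ * XS).mulVec w) = 0 := by
        rw [hsub, dotProduct_zero]
      rw [← Matrix.mulVec_mulVec, Matrix.dotProduct_mulVec,
        Matrix.vecMul_transpose] at h1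
      exact dotProduct_self_eq_zero.1 h1
    have hwz : w = 0 := by
      set u : Fin p → ℝ := fun i => if h : i ∈ S then w ⟨i, h⟩ else 0 with hu
      have huS : ∀ i ∉ S, u i = 0 := fun i hi => by simp [hu, hi]
      have hXu : X.mulVec u = 0 := by
        funext k
        rw [hext u huS k]
        have huw : (fun j : {j // j ∈ S} => u j.1) = w := by
          funext j; simp [hu, j.2]
        rw [huw, hXSw]
      have huz := hXinj u hXu
      funext j
      have hj : u j.1 = 0 := by rw [huz]; rfl
      simpa [hu, dif_pos j.2] using hj
    have hfin : w1 - w2 = 0 := by rw [← hwdef]; exact hwz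
    exact sub_eq_zero.1 hfin
  -- restricted lasso minimizer and its KKT conditions
  obtain ⟨β, v, hv1, hv2, hkkt, _⟩ := lasso_kkt XS y lam hlam
  set r : Fin m → ℝ := y - XS.mulVec β with hr
  have hrk : ∀ k, r k = y k - XS.mulVec β k := fun _ => rfl
  set A : Matrix {j // j ∈ S} {j // j ∈ S} ℝ := XSᵀ * XS with hA
  have hAinv : A⁻¹ * A = 1 := Matrix.nonsing_inv_mul A hAdet
  have hkktv : XSᵀ.mulVec r = lam • v := by
    funext j
    simp only [Matrix.mulVec, dotProduct, Matrix.transpose_apply,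
      Pi.smul_apply, smul_eq_mul]
    calc ∑ k, XS k j * r k = ∑ k, XS k j * (y k - XS.mulVec β k) := rfl
      _ = lam * v j := hkkt j
  -- residual identity
  have hPXS : (1 - XS * A⁻¹ * XSᵀ) * XS = 0 := by
    rw [Matrix.sub_mul, Matrix.one_mul, Matrix.mul_assoc (XS * A⁻¹), ← hA,
      Matrix.mul_assoc XS, hAinv, Matrix.mul_one, sub_self]
  have hresid : r = lam • XS.mulVec (A⁻¹.mulVec v)
      + (1 - XS * A⁻¹ * XSᵀ).mulVec (X.mulVec ε) := by
    have hsplit : r = (1 - XS * A⁻¹ * XSᵀ).mulVec r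
        + (XS * A⁻¹ * XSᵀ).mulVec r := by
      rw [Matrix.sub_mulVec, Matrix.one_mulVec]
      abel
    have hterm2 : (XS * A⁻¹ * XSᵀ).mulVec r = lam • XS.mulVec (A⁻¹.mulVec v) := by
      rw [← Matrix.mulVec_mulVec, ← Matrix.mulVec_mulVec, hkktv,
        Matrix.mulVec_smul, Matrix.mulVec_smul]
    have hβstar : X.mulVec γstar = XS.mulVec (fun j : {j // j ∈ S} => γstar j.1) := by
      funext k; exact hext γstar hsupp k
    have hterm1 : (1 - XS * A⁻¹ * XSᵀ).mulVec r
        = (1 - XS * A⁻¹ * XSᵀ).mulVec (X.mulVec ε) := by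
      rw [hr, Matrix.mulVec_sub, Matrix.mulVec_mulVec, hPXS, Matrix.zero_mulVec,
        sub_zero, hy, hβstar, Matrix.mulVec_add, Matrix.mulVec_mulVec, hPXS,
        Matrix.zero_mulVec, zero_add]
    rw [hsplit, hterm1, hterm2, add_comm]
  -- strict dual feasibility off the support
  have hstrict : ∀ i ∉ S, |(fun k => X k i) ⬝ᵥ r| < lam := by
    intro i hi
    have h := hcond v hv1 i hi
    rw [hresid, dotProduct_add, dotProduct_smul, smul_eq_mul]
    exact h
  -- full-size primal and dual vectors
  set γt : Fin p → ℝ := fun i => if h : i ∈ S then β ⟨i, h⟩ else 0 with hγt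
  set V : Fin p → ℝ := fun i => if h : i ∈ S then v ⟨i, h⟩
      else ((fun k => X k i) ⬝ᵥ r) / lam with hVdef
  have hγtS : ∀ i ∉ S, γt i = 0 := fun i hi => by simp [hγt, hi]
  have hXγt : X.mulVec γt = XS.mulVec β := by
    funext k
    rw [hext γt hγtS k]
    have hβeq : (fun j : {j // j ∈ S} => γt j.1) = β := by
      funext j; simp [hγt, dif_pos j.2]
    rw [hβeq]
  have hfull : ∀ i, ∑ k, X k i * r k = lam * V i := by
    intro i
    by_cases hi : i ∈ S
    · have hk := hkkt ⟨i, hi⟩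
      simp only [hVdef, dif_pos hi]
      rw [← hk]
      refine Finset.sum_congr rfl fun k _ => ?_
      have hXk : XS k ⟨i, hi⟩ = X k i := by rw [hXS]; rfl
      rw [hXk, hrk k]
    · simp only [hVdef, dif_neg hi]
      rw [mul_div_cancel₀ _ hlamne]
      rfl
  have hVle : ∀ i, |V i| ≤ 1 := by
    intro i
    by_cases hi : i ∈ S
    · simpa only [hVdef, dif_pos hi] using hv1 ⟨i, hi⟩
    · simp only [hVdef, dif_neg hi]
      rw [abs_div, abs_of_pos hlam, div_le_one hlam]
      exact (hstrict i hi).le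
  have hVlt : ∀ i ∉ S, |V i| < 1 := by
    intro i hi
    simp only [hVdef, dif_neg hi]
    rw [abs_div, abs_of_pos hlam, div_lt_one hlam]
    exact hstrict i hi
  have hVγt : ∀ i, V i * γt i = |γt i| := by
    intro i
    by_cases hi : i ∈ S
    · simp only [hVdef, hγt, dif_pos hi]
      exact hv2 ⟨i, hi⟩
    · simp [hγt, hVdef, hi]
  -- comparison argument
  set δ : Fin p → ℝ := γhat - γt with hδ
  have hδi : ∀ i, δ i = γhat i - γt i := fun _ => rfl
  have hXδv : X.mulVec δ = X.mulVec γhat - XS.mulVec β := by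
    rw [hδ, Matrix.mulVec_sub, hXγt]
  have hw : ∀ k, y k - X.mulVec γhat k = r k - X.mulVec δ k := by
    intro k
    have h1 := congrFun hXδv k
    simp only [Pi.sub_apply] at h1
    rw [hrk k, h1]; ring
  have hcross : ∑ k, r k * X.mulVec δ k = ∑ i, lam * (V i * δ i) := by
    calc ∑ k, r k * X.mulVec δ k = ∑ k, ∑ i, X k i * r k * δ i := by
          refine Finset.sum_congr rfl fun k _ => ?_
          simp only [Matrix.mulVec, dotProduct]
          rw [Finset.mul_sum]
          exact Finset.sum_congr rfl fun i _ => by ring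
      _ = ∑ i, ∑ k, X k i * r k * δ i := Finset.sum_comm
      _ = ∑ i, lam * (V i * δ i) := by
          refine Finset.sum_congr rfl fun i _ => ?_
          rw [← Finset.sum_mul, hfull i, mul_assoc]
  have hexp : ∑ k, (y k - X.mulVec γhat k)^2
      = ∑ k, (r k)^2 - 2 * ∑ k, r k * X.mulVec δ k + ∑ k, (X.mulVec δ k)^2 := by
    have h1 : ∀ k, (y k - X.mulVec γhat k)^2
        = (r k)^2 - 2*(r k * X.mulVec δ k) + (X.mulVec δ k)^2 := fun k => by
      rw [hw k]; ring
    rw [Finset.sum_congr rfl fun k _ => h1 k, Finset.sum_add_distrib,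
      Finset.sum_sub_distrib, ← Finset.mul_sum]
  have hrsq : ∑ k, (y k - X.mulVec γt k)^2 = ∑ k, (r k)^2 := by
    refine Finset.sum_congr rfl fun k _ => ?_
    rw [congrFun hXγt k, hrk k]
  have hkey := hmin γt
  rw [hexp, hrsq] at hkey
  have hsum1 : ∑ i, lam * (V i * δ i)
      = lam * (∑ i, V i * γhat i) - lam * (∑ i, |γt i|) := by
    have h1 : ∀ i, lam * (V i * δ i)
        = lam * (V i * γhat i) - lam * (V i * γt i) := fun i => by
      rw [hδi]; ring
    rw [Finset.sum_congr rfl fun i _ => h1 i, Finset.sum_sub_distrib,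
      ← Finset.mul_sum, ← Finset.mul_sum]
    congr 1
    rw [Finset.sum_congr rfl fun i _ => hVγt i]
  have hSw : 0 ≤ ∑ k, (X.mulVec δ k)^2 := Finset.sum_nonneg fun k _ => sq_nonneg _
  have hmain : ∑ i, (|γhat i| - V i * γhat i) ≤ 0 := by
    rw [Finset.sum_sub_distrib]
    have h2 : lam * (∑ i, |γhat i|) - lam * (∑ i, V i * γhat i) ≤ 0 := by
      linarith [hkey, hcross, hsum1, hSw]
    by_contra hpos
    push_neg at hpos
    nlinarith [mul_pos hlam hpos]
  have hTnn : ∀ i ∈ Finset.univ, (0:ℝ) ≤ |γhat i| - V i * γhat i := by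
    intro i _
    have h1 : V i * γhat i ≤ |V i * γhat i| := le_abs_self _
    have h2 : |V i * γhat i| = |V i| * |γhat i| := abs_mul _ _
    have h3 : |V i| * |γhat i| ≤ 1 * |γhat i| :=
      mul_le_mul_of_nonneg_right (hVle i) (abs_nonneg _)
    linarith
  have hTzero := (Finset.sum_eq_zero_iff_of_nonneg hTnn).1
    (le_antisymm hmain (Finset.sum_nonneg hTnn))
  intro i hi
  have hT := hTzero i (Finset.mem_univ i)
  have h1 : V i * γhat i ≤ |V i| * |γhat i| := by
    rw [← abs_mul]; exact le_abs_self _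
  have h2 := hVlt i hi
  have h3 : |γhat i| ≤ 0 := by nlinarith [abs_nonneg (γhat i)]
  exact abs_eq_zero.1 (le_antisymm h3 (abs_nonneg _))
end
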